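/- arXiv:1507.06600 — 6 statements merged into one kernel-verified Lean document; each statement's English description precedes it below -/
import Mathlib

section
/- For every bounded self-adjoint operator H on a complex Hilbert space 𝓗, every unit vector ψ ∈ 𝓗, every λ ∈ ℝ and every ε > 0, the sojourn time satisfies 𝒯(H,ψ) ≥ (1/ε)·(2ε·Im⟨ψ, (H − λ − iε)⁻¹ ψ⟩)². -/
open MeasureTheory Complex
open scoped ENNReal

variable {𝓗 : Type*} [NormedAddCommGroup 𝓗] [InnerProductSpace ℂ 𝓗] [CompleteSpace 𝓗]

/-- The unitary group `e^{-iHt}` generated by a bounded operator `H`,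
defined via the exponential series. -/
noncomputable def timeEvolution (H : 𝓗 →L[ℂ] 𝓗) (t : ℝ) : 𝓗 →L[ℂ] 𝓗 :=
  NormedSpace.exp ((-(Complex.I * (t : ℂ))) • H)

/-- The sojourn time `𝒯(H,ψ) = ∫_ℝ |⟨ψ, e^{-iHt}ψ⟩|² dt ∈ [0,∞]`. -/
noncomputable def sojournTime (H : 𝓗 →L[ℂ] 𝓗) (ψ : 𝓗) : ℝ≥0∞ :=
  ∫⁻ t : ℝ, ENNReal.ofReal (‖(inner ℂ ψ (timeEvolution H t ψ) : ℂ)‖ ^ 2)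

/-- The resolvent `R(z) = (H - z)⁻¹` (via `Ring.inverse`; for self-adjoint `H`
and `Im z ≠ 0` the operator `H - z` is invertible and this is its genuine inverse). -/
noncomputable def resolventOp (H : 𝓗 →L[ℂ] 𝓗) (z : ℂ) : 𝓗 →L[ℂ] 𝓗 :=
  Ring.inverse (H - z • 1)


lemma timeEvolution_eq (H : 𝓗 →L[ℂ] 𝓗) (t : ℝ) :
    timeEvolution H t = NormedSpace.exp ((t : ℂ) • ((-Complex.I) • H)) := by
  rw [timeEvolution, smul_smul]; ring_nf

lemma star_timeEvolution (H : 𝓗 →L[ℂ] 𝓗) (hH : IsSelfAdjoint H) (t : ℝ) :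
    star (timeEvolution H t) = timeEvolution H (-t) := by
  rw [timeEvolution, timeEvolution, NormedSpace.star_exp, star_smul, hH.star_eq]
  congr 1
  simp only [star_neg, star_mul', RCLike.star_def, Complex.conj_I, Complex.conj_ofReal]
  push_cast; ring

lemma timeEvolution_mul (H : 𝓗 →L[ℂ] 𝓗) (s t : ℝ) :
    timeEvolution H s * timeEvolution H t = timeEvolution H (s + t) := by
  letI : NormedAlgebra ℚ (𝓗 →L[ℂ] 𝓗) := .restrictScalars ℚ ℂ _
  rw [timeEvolution, timeEvolution, timeEvolution, ← NormedSpace.exp_add_of_commute]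
  · congr 1; push_cast; module
  · exact (Commute.refl H).smul_left _ |>.smul_right _

lemma timeEvolution_zero (H : 𝓗 →L[ℂ] 𝓗) : timeEvolution H 0 = 1 := by
  rw [timeEvolution]; simp [NormedSpace.exp_zero]

lemma timeEvolution_neg_apply (H : 𝓗 →L[ℂ] 𝓗) (t : ℝ) (x : 𝓗) :
    timeEvolution H (-t) (timeEvolution H t x) = x := by
  have h := timeEvolution_mul H (-t) t
  rw [neg_add_cancel, timeEvolution_zero] at h
  calc timeEvolution H (-t) (timeEvolution H t x)
      = (timeEvolution H (-t) * timeEvolution H t) x := rfl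
    _ = x := by rw [h]; rfl

lemma adjoint_timeEvolution (H : 𝓗 →L[ℂ] 𝓗) (hH : IsSelfAdjoint H) (t : ℝ) :
    ContinuousLinearMap.adjoint (timeEvolution H t) = timeEvolution H (-t) := by
  rw [← ContinuousLinearMap.star_eq_adjoint, star_timeEvolution H hH]

lemma norm_timeEvolution_apply (H : 𝓗 →L[ℂ] 𝓗) (hH : IsSelfAdjoint H) (t : ℝ) (x : 𝓗) :
    ‖timeEvolution H t x‖ = ‖x‖ := by
  have h1 : (inner ℂ (timeEvolution H t x) (timeEvolution H t x) : ℂ)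
      = inner ℂ x x := by
    rw [← ContinuousLinearMap.adjoint_inner_right, adjoint_timeEvolution H hH,
      timeEvolution_neg_apply]
  rw [@norm_eq_sqrt_re_inner ℂ, h1, ← @norm_eq_sqrt_re_inner ℂ]

lemma inner_timeEvolution_neg (H : 𝓗 →L[ℂ] 𝓗) (hH : IsSelfAdjoint H) (t : ℝ) (ψ : 𝓗) :
    (inner ℂ ψ (timeEvolution H (-t) ψ) : ℂ) = starRingEnd ℂ (inner ℂ ψ (timeEvolution H t ψ)) := by
  rw [← adjoint_timeEvolution H hH, ContinuousLinearMap.adjoint_inner_right, ← inner_conj_symm]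

lemma HasDerivAt.comp_ofReal'' {A : Type*} [NormedAddCommGroup A] [NormedSpace ℂ A]
    {g : ℂ → A} {g' : A} {z : ℝ} (h : HasDerivAt g g' (z : ℂ)) :
    HasDerivAt (fun y : ℝ => g (y : ℂ)) g' z := by
  have := (h.hasFDerivAt.restrictScalars ℝ).comp_hasDerivAt z Complex.ofRealCLM.hasDerivAt
  simpa [Function.comp_def] using this

lemma continuous_timeEvolution_apply (H : 𝓗 →L[ℂ] 𝓗) (ψ : 𝓗) :
    Continuous fun t : ℝ => timeEvolution H t ψ := by
  letI : NormedAlgebra ℚ (𝓗 →L[ℂ] 𝓗) := .restrictScalars ℚ ℂ _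
  have h1 : Continuous fun t : ℝ => ((-(Complex.I * (t : ℂ))) • H) := by
    exact ((continuous_const.mul Complex.continuous_ofReal).neg).smul continuous_const
  have h2 : Continuous fun t : ℝ => timeEvolution H t :=
    NormedSpace.exp_continuous.comp h1
  exact (ContinuousLinearMap.apply ℂ 𝓗 ψ).continuous.comp h2

lemma hasDerivAt_timeEvolution_apply (H : 𝓗 →L[ℂ] 𝓗) (ψ : 𝓗) (t : ℝ) :
    HasDerivAt (fun s : ℝ => timeEvolution H s ψ)
      ((-Complex.I) • H (timeEvolution H t ψ)) t := by
  set x : 𝓗 →L[ℂ] 𝓗 := (-Complex.I) • H with hx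
  have h1 : HasDerivAt (fun u : ℂ => NormedSpace.exp (u • x))
      (x * NormedSpace.exp ((t : ℂ) • x)) (t : ℂ) :=
    hasDerivAt_exp_smul_const' x (t : ℂ)
  have h2 : HasDerivAt (fun s : ℝ => NormedSpace.exp ((s : ℂ) • x))
      (x * NormedSpace.exp ((t : ℂ) • x)) t := h1.comp_ofReal''
  have h3 := ((ContinuousLinearMap.apply ℂ 𝓗 ψ).restrictScalars ℝ).hasFDerivAt.comp_hasDerivAt t h2
  have efun : (fun s : ℝ => timeEvolution H s ψ)
      = (⇑(((ContinuousLinearMap.apply ℂ 𝓗 ψ).restrictScalars ℝ))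
          ∘ fun s : ℝ => NormedSpace.exp ((s : ℂ) • x)) := by
    funext s; rw [timeEvolution_eq]; rfl
  have ederiv : (((ContinuousLinearMap.apply ℂ 𝓗 ψ).restrictScalars ℝ))
      (x * NormedSpace.exp ((t : ℂ) • x)) = (-Complex.I) • H (timeEvolution H t ψ) := by
    rw [timeEvolution_eq]
    simp [hx, ContinuousLinearMap.mul_apply]
  rw [efun, ← ederiv]
  exact h3


lemma isUnit_sub_smul_one (H : 𝓗 →L[ℂ] 𝓗) (hH : IsSelfAdjoint H) {z : ℂ} (hz : z.im ≠ 0) :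
    IsUnit (H - z • 1) := by
  by_contra h
  have hmem : z ∈ spectrum ℂ H := by
    rw [spectrum.mem_iff]
    intro hu
    exact h (by simpa [Algebra.algebraMap_eq_smul_one, neg_sub] using hu.neg)
  have := hH.mem_spectrum_eq_re hmem
  rw [this] at hz
  simp at hz

lemma inner_resolvent (H : 𝓗 →L[ℂ] 𝓗) (hH : IsSelfAdjoint H) (ψ : 𝓗) {z : ℂ}
    (hz : 0 < z.im) :
    (inner ℂ ψ (resolventOp H z ψ) : ℂ)
      = ∫ t in Set.Ioi (0 : ℝ),
          Complex.I * Complex.exp (Complex.I * z * t) * (inner ℂ ψ (timeEvolution H t ψ) : ℂ) := by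
  set ce : ℝ → ℂ := fun t => Complex.exp (Complex.I * z * t) with hce
  set U : ℝ → 𝓗 := fun t => timeEvolution H t ψ with hU
  set φ : ℝ → 𝓗 := fun t => ce t • U t with hφ
  set w : ℝ → 𝓗 := fun t => (Complex.I * ce t) • U t with hw
  set φ' : ℝ → 𝓗 := fun t =>
    ce t • ((-Complex.I) • H (U t)) + (ce t * (Complex.I * z)) • U t with hφ'
  have hUcont : Continuous U := continuous_timeEvolution_apply H ψ
  have hcecont : Continuous ce :=
    Complex.continuous_exp.comp (continuous_const.mul Complex.continuous_ofReal)
  have hnormce : ∀ t : ℝ, ‖ce t‖ = Real.exp (-(z.im * t)) := by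
    intro t
    rw [hce]
    simp only [Complex.norm_exp]
    congr 1
    simp [Complex.mul_re, Complex.mul_im]
  have hnormU : ∀ t : ℝ, ‖U t‖ = ‖ψ‖ := fun t => norm_timeEvolution_apply H hH t ψ
  have hcederiv : ∀ t : ℝ, HasDerivAt ce (ce t * (Complex.I * z)) t := by
    intro t
    have h0 : HasDerivAt (fun u : ℂ => Complex.exp (Complex.I * z * u))
        (Complex.exp (Complex.I * z * t) * (Complex.I * z)) (t : ℂ) := by
      simpa using ((hasDerivAt_id (t : ℂ)).const_mul (Complex.I * z)).cexp
    exact h0.comp_ofReal''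
  have hφderiv : ∀ t : ℝ, HasDerivAt φ (φ' t) t := fun t =>
    (hcederiv t).smul (hasDerivAt_timeEvolution_apply H ψ t)
  have hwint : IntegrableOn w (Set.Ioi (0 : ℝ)) := by
    refine Integrable.mono' (((exp_neg_integrableOn_Ioi 0 hz)).const_mul ‖ψ‖)
      ((continuous_const.mul hcecont).smul hUcont).aestronglyMeasurable ?_
    filter_upwards with t
    rw [hw]
    simp only [norm_smul, norm_mul, Complex.norm_I, one_mul, hnormce, hnormU]
    rw [neg_mul z.im t]
    exact le_of_eq (mul_comm _ _)
  have hφ'int : IntegrableOn φ' (Set.Ioi (0 : ℝ)) := by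
    refine Integrable.mono' (((exp_neg_integrableOn_Ioi 0 hz)).const_mul
      ((‖z‖ + ‖H‖) * ‖ψ‖))
      ((hcecont.smul ((continuous_const.smul (H.continuous.comp hUcont)))).add
        ((hcecont.mul continuous_const).smul hUcont)).aestronglyMeasurable
      ?_
    filter_upwards with t
    rw [hφ']
    have h2 : ‖(ce t * (Complex.I * z)) • U t‖ ≤ Real.exp (-(z.im * t)) * (‖z‖ * ‖ψ‖) := by
      rw [norm_smul, norm_mul, hnormce, hnormU, norm_mul, Complex.norm_I, one_mul]
      ring_nf
      exact le_refl _
    have h3 : ‖ce t • ((-Complex.I) • H (U t))‖ ≤ Real.exp (-(z.im * t)) * (‖H‖ * ‖ψ‖) := by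
      rw [norm_smul, hnormce, norm_smul]
      simp only [norm_neg, Complex.norm_I, one_mul]
      have := H.le_opNorm (U t)
      rw [hnormU] at this
      exact mul_le_mul_of_nonneg_left this (Real.exp_nonneg _)
    calc ‖ce t • ((-Complex.I) • H (U t)) + (ce t * (Complex.I * z)) • U t‖
        ≤ ‖ce t • ((-Complex.I) • H (U t))‖ + ‖(ce t * (Complex.I * z)) • U t‖ := norm_add_le _ _
      _ ≤ Real.exp (-(z.im * t)) * (‖H‖ * ‖ψ‖) + Real.exp (-(z.im * t)) * (‖z‖ * ‖ψ‖) :=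
          add_le_add h3 h2
      _ = (‖z‖ + ‖H‖) * ‖ψ‖ * Real.exp (-z.im * t) := by rw [neg_mul]; ring
  have hφtendsto : Filter.Tendsto φ Filter.atTop (nhds 0) := by
    have h4 : Filter.Tendsto (fun t : ℝ => z.im * t) Filter.atTop Filter.atTop :=
      Filter.tendsto_id.const_mul_atTop hz
    have h5 := (Real.tendsto_exp_neg_atTop_nhds_zero.comp h4).mul_const ‖ψ‖
    refine squeeze_zero_norm (fun t => ?_) (by simpa using h5)
    rw [hφ, norm_smul, hnormce, hnormU]
  have hFTC : ∫ t in Set.Ioi (0 : ℝ), φ' t = 0 - φ 0 :=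
    MeasureTheory.integral_Ioi_of_hasDerivAt_of_tendsto
      (hcecont.smul hUcont).continuousWithinAt (fun x _ => hφderiv x) hφ'int hφtendsto
  have hφ0 : φ 0 = ψ := by
    rw [hφ]
    simp [hce, hU, timeEvolution_zero]
  have halg : ∀ t : ℝ, (H - z • 1) (w t) = -(φ' t) := by
    intro t
    rw [hw, hφ']
    simp only [_root_.map_smul, ContinuousLinearMap.sub_apply, ContinuousLinearMap.smul_apply,
      ContinuousLinearMap.one_apply]
    module
  have h1 : (H - z • 1) (∫ t in Set.Ioi (0 : ℝ), w t) = ψ := by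
    rw [← ContinuousLinearMap.integral_comp_comm _ hwint]
    rw [MeasureTheory.integral_congr_ae (Filter.Eventually.of_forall halg)]
    rw [MeasureTheory.integral_neg, hFTC, hφ0]
    simp
  have hu := isUnit_sub_smul_one H hH (ne_of_gt hz)
  have hres : resolventOp H z ψ = ∫ t in Set.Ioi (0 : ℝ), w t := by
    conv_lhs => rw [← h1]
    rw [resolventOp]
    calc Ring.inverse (H - z • 1) ((H - z • 1) (∫ t in Set.Ioi (0 : ℝ), w t))
        = (Ring.inverse (H - z • 1) * (H - z • 1)) (∫ t in Set.Ioi (0 : ℝ), w t) := rfl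
      _ = _ := by rw [Ring.inverse_mul_cancel _ hu]; rfl
  rw [hres, ← integral_inner hwint ψ]
  apply MeasureTheory.integral_congr_ae
  filter_upwards with t
  rw [inner_smul_right]

lemma integral_exp_neg_mul_Ioi {b : ℝ} (hb : 0 < b) :
    ∫ t in Set.Ioi (0 : ℝ), Real.exp (-(b * t)) = 1 / b := by
  have hderiv : ∀ x ∈ Set.Ioi (0 : ℝ),
      HasDerivAt (fun t : ℝ => -Real.exp (-(b * t)) / b) (Real.exp (-(b * x))) x := by
    intro x _
    simpa [hb.ne'] using (((hasDerivAt_id x).const_mul b).neg.exp.neg.div_const b)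
  have hint : IntegrableOn (fun t : ℝ => Real.exp (-(b * t))) (Set.Ioi (0 : ℝ)) := by
    simpa [neg_mul] using exp_neg_integrableOn_Ioi 0 hb
  have htend : Filter.Tendsto (fun t : ℝ => -Real.exp (-(b * t)) / b) Filter.atTop (nhds 0) := by
    have h4 : Filter.Tendsto (fun t : ℝ => b * t) Filter.atTop Filter.atTop :=
      Filter.tendsto_id.const_mul_atTop hb
    have h5 := ((Real.tendsto_exp_neg_atTop_nhds_zero.comp h4).neg).div_const b
    simpa using h5
  have hcont : ContinuousWithinAt (fun t : ℝ => -Real.exp (-(b * t)) / b)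
      (Set.Ici (0 : ℝ)) 0 := by
    apply Continuous.continuousWithinAt
    continuity
  have := MeasureTheory.integral_Ioi_of_hasDerivAt_of_tendsto hcont hderiv hint htend
  rw [this]
  field_simp
  simp

lemma lintegral_sq_Iio_eq (H : 𝓗 →L[ℂ] 𝓗) (hH : IsSelfAdjoint H) (ψ : 𝓗) :
    ∫⁻ t in Set.Iio (0 : ℝ), ENNReal.ofReal (‖(inner ℂ ψ (timeEvolution H t ψ) : ℂ)‖ ^ 2)
      = ∫⁻ t in Set.Ioi (0 : ℝ),
          ENNReal.ofReal (‖(inner ℂ ψ (timeEvolution H t ψ) : ℂ)‖ ^ 2) := by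
  have hsym : ∀ t : ℝ, ‖(inner ℂ ψ (timeEvolution H (-t) ψ) : ℂ)‖
      = ‖(inner ℂ ψ (timeEvolution H t ψ) : ℂ)‖ := by
    intro t
    rw [inner_timeEvolution_neg H hH t ψ]
    exact RCLike.norm_conj _
  have hmp : MeasurePreserving (fun t : ℝ => -t) volume volume :=
    Measure.measurePreserving_neg volume
  have hemb : MeasurableEmbedding (fun t : ℝ => -t) := measurableEmbedding_neg
  have h := hmp.setLIntegral_comp_emb hemb
    (fun t => ENNReal.ofReal (‖(inner ℂ ψ (timeEvolution H t ψ) : ℂ)‖ ^ 2)) (Set.Iio (0 : ℝ))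
  have himg : (fun t : ℝ => -t) '' Set.Iio (0 : ℝ) = Set.Ioi (0 : ℝ) := by
    ext x
    simp only [Set.mem_image, Set.mem_Iio, Set.mem_Ioi]
    constructor
    · rintro ⟨y, hy, rfl⟩; linarith
    · intro hx; exact ⟨-x, by linarith, by ring⟩
  rw [himg] at h
  rw [← h]
  apply MeasureTheory.setLIntegral_congr_fun measurableSet_Iio
  intro t _
  simp only [hsym]


/-- For every bounded self-adjoint operator `H`, unit vector `ψ`,
`λ ∈ ℝ` and `ε > 0`, the sojourn time satisfies
`𝒯(H,ψ) ≥ (1/ε)·(2ε·Im⟨ψ, (H − λ − iε)⁻¹ ψ⟩)²`. -/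
theorem sojournTime_ge_of_resolvent (H : 𝓗 →L[ℂ] 𝓗) (hH : IsSelfAdjoint H)
    (ψ : 𝓗) (hψ : ‖ψ‖ = 1) (lam ε : ℝ) (hε : 0 < ε) :
    ENNReal.ofReal ((1 / ε) *
        (2 * ε * (inner ℂ ψ (resolventOp H ((lam : ℂ) + (ε : ℂ) * Complex.I) ψ) : ℂ).im) ^ 2)
      ≤ sojournTime H ψ := by
  set z : ℂ := (lam : ℂ) + (ε : ℂ) * Complex.I with hzdef
  have hzim : z.im = ε := by simp [hzdef]
  have hz : 0 < z.im := by rw [hzim]; exact hε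
  set f : ℝ → ℂ := fun t => inner ℂ ψ (timeEvolution H t ψ) with hf
  have hfcont : Continuous f :=
    continuous_const.inner (continuous_timeEvolution_apply H ψ)
  have hfle : ∀ t : ℝ, ‖f t‖ ≤ 1 := by
    intro t
    calc ‖f t‖ ≤ ‖ψ‖ * ‖timeEvolution H t ψ‖ := norm_inner_le_norm _ _
      _ = 1 := by rw [norm_timeEvolution_apply H hH t ψ, hψ]; ring
  have hnormce : ∀ t : ℝ, ‖Complex.exp (Complex.I * z * t)‖ = Real.exp (-(ε * t)) := by
    intro t
    simp only [Complex.norm_exp]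
    congr 1
    simp [Complex.mul_re, Complex.mul_im, hzim]
  -- integrability of the weighted norms
  have hJint : IntegrableOn (fun t : ℝ => Real.exp (-(ε * t)) * ‖f t‖) (Set.Ioi (0 : ℝ)) := by
    refine Integrable.mono' (by simpa [neg_mul, IntegrableOn] using exp_neg_integrableOn_Ioi 0 hε)
      (((Real.continuous_exp.comp (continuous_const.mul continuous_id).neg).mul
        hfcont.norm)).aestronglyMeasurable ?_
    filter_upwards with t
    rw [Real.norm_eq_abs, _root_.abs_of_nonneg (by positivity)]
    calc Real.exp (-(ε * t)) * ‖f t‖ ≤ Real.exp (-(ε * t)) * 1 :=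
        mul_le_mul_of_nonneg_left (hfle t) (Real.exp_nonneg _)
      _ = Real.exp (-(ε * t)) := mul_one _
  set Jr : ℝ := ∫ t in Set.Ioi (0 : ℝ), Real.exp (-(ε * t)) * ‖f t‖ with hJr
  have hJr0 : 0 ≤ Jr := by
    apply MeasureTheory.integral_nonneg
    intro t
    positivity
  set I0 : ℝ := (inner ℂ ψ (resolventOp H z ψ) : ℂ).im with hI0
  -- |I0| ≤ Jr
  have hcint : IntegrableOn (fun t : ℝ => Complex.I * Complex.exp (Complex.I * z * t) * f t)
      (Set.Ioi (0 : ℝ)) := by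
    refine Integrable.mono' (by simpa [neg_mul, IntegrableOn] using exp_neg_integrableOn_Ioi 0 hε)
      ((continuous_const.mul (Complex.continuous_exp.comp
        (continuous_const.mul Complex.continuous_ofReal))).mul hfcont).aestronglyMeasurable ?_
    filter_upwards with t
    rw [norm_mul, norm_mul, Complex.norm_I, one_mul, hnormce]
    calc Real.exp (-(ε * t)) * ‖f t‖ ≤ Real.exp (-(ε * t)) * 1 :=
        mul_le_mul_of_nonneg_left (hfle t) (Real.exp_nonneg _)
      _ = Real.exp (-(ε * t)) := mul_one _
  have habs : |I0| ≤ Jr := by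
    have hIeq : I0 = ∫ t in Set.Ioi (0 : ℝ),
        (Complex.I * Complex.exp (Complex.I * z * t) * f t).im := by
      rw [hI0, inner_resolvent H hH ψ hz]
      exact (Complex.imCLM.integral_comp_comm hcint).symm
    rw [hIeq, ← Real.norm_eq_abs]
    refine MeasureTheory.norm_integral_le_of_norm_le hJint ?_
    filter_upwards with t
    rw [Real.norm_eq_abs]
    calc |(Complex.I * Complex.exp (Complex.I * z * t) * f t).im|
        ≤ ‖Complex.I * Complex.exp (Complex.I * z * t) * f t‖ := Complex.abs_im_le_norm _
      _ = Real.exp (-(ε * t)) * ‖f t‖ := by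
          rw [norm_mul, norm_mul, Complex.norm_I, one_mul, hnormce]
  -- ENNReal Cauchy-Schwarz
  set Q : ℝ≥0∞ := ∫⁻ t in Set.Ioi (0 : ℝ), ENNReal.ofReal (‖f t‖ ^ 2) with hQ
  have hofJr : ENNReal.ofReal Jr
      = ∫⁻ t in Set.Ioi (0 : ℝ), ENNReal.ofReal (Real.exp (-(ε * t)) * ‖f t‖) :=
    MeasureTheory.ofReal_integral_eq_lintegral_ofReal hJint
      (Filter.Eventually.of_forall fun t => by positivity)
  have hconj : Real.HolderConjugate 2 2 := Real.holderConjugate_iff.mpr ⟨one_lt_two, by norm_num⟩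
  have hmeas1 : AEMeasurable (fun t : ℝ => ENNReal.ofReal (Real.exp (-(ε * t))))
      (volume.restrict (Set.Ioi (0 : ℝ))) := by
    apply Continuous.aemeasurable
    exact ENNReal.continuous_ofReal.comp
      (Real.continuous_exp.comp (continuous_const.mul continuous_id).neg)
  have hmeas2 : AEMeasurable (fun t : ℝ => ENNReal.ofReal ‖f t‖)
      (volume.restrict (Set.Ioi (0 : ℝ))) := by
    apply Continuous.aemeasurable
    exact ENNReal.continuous_ofReal.comp hfcont.norm
  have hholder := ENNReal.lintegral_mul_le_Lp_mul_Lq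
    (volume.restrict (Set.Ioi (0 : ℝ))) hconj hmeas1 hmeas2
  have hP : ∫⁻ t in Set.Ioi (0 : ℝ), ENNReal.ofReal (Real.exp (-(ε * t))) ^ (2 : ℝ)
      = ENNReal.ofReal (1 / (2 * ε)) := by
    have heq : ∀ t : ℝ, ENNReal.ofReal (Real.exp (-(ε * t))) ^ (2 : ℝ)
        = ENNReal.ofReal (Real.exp (-(2 * ε * t))) := by
      intro t
      rw [ENNReal.ofReal_rpow_of_pos (Real.exp_pos _)]
      congr 1
      rw [← Real.exp_mul]
      congr 1
      ring
    rw [lintegral_congr heq]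
    have hint2 : IntegrableOn (fun t : ℝ => Real.exp (-(2 * ε * t))) (Set.Ioi (0 : ℝ)) := by
      have h2e : (0 : ℝ) < 2 * ε := by positivity
      simpa [neg_mul, mul_assoc] using exp_neg_integrableOn_Ioi 0 h2e
    rw [← MeasureTheory.ofReal_integral_eq_lintegral_ofReal hint2
      (Filter.Eventually.of_forall fun t => (Real.exp_pos _).le),
      integral_exp_neg_mul_Ioi (by positivity)]
  have hQrw : ∫⁻ t in Set.Ioi (0 : ℝ), ENNReal.ofReal ‖f t‖ ^ (2 : ℝ) = Q := by
    apply lintegral_congr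
    intro t
    rw [ENNReal.ofReal_rpow_of_nonneg (norm_nonneg _) (by norm_num : (0:ℝ) ≤ 2)]
    congr 1
    rw [← Real.rpow_natCast ‖f t‖ 2]
    norm_num
  have hAleq : ENNReal.ofReal Jr
      ≤ ENNReal.ofReal (1 / (2 * ε)) ^ ((1 : ℝ)/2) * Q ^ ((1 : ℝ)/2) := by
    rw [hofJr]
    have hpt : ∀ t : ℝ, ENNReal.ofReal (Real.exp (-(ε * t)) * ‖f t‖)
        = ENNReal.ofReal (Real.exp (-(ε * t))) * ENNReal.ofReal ‖f t‖ := fun t =>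
      ENNReal.ofReal_mul (Real.exp_nonneg _)
    rw [lintegral_congr hpt]
    calc ∫⁻ t in Set.Ioi (0 : ℝ),
          ENNReal.ofReal (Real.exp (-(ε * t))) * ENNReal.ofReal ‖f t‖
        ≤ (∫⁻ t in Set.Ioi (0 : ℝ), ENNReal.ofReal (Real.exp (-(ε * t))) ^ (2 : ℝ))
            ^ ((1 : ℝ)/2)
          * (∫⁻ t in Set.Ioi (0 : ℝ), ENNReal.ofReal ‖f t‖ ^ (2 : ℝ)) ^ ((1 : ℝ)/2) := by
          simpa using hholder
      _ = ENNReal.ofReal (1 / (2 * ε)) ^ ((1 : ℝ)/2) * Q ^ ((1 : ℝ)/2) := by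
          rw [hP, hQrw]
  have hhalf : ∀ x : ℝ≥0∞, (x ^ ((1 : ℝ)/2)) ^ (2 : ℕ) = x := by
    intro x
    rw [← ENNReal.rpow_natCast (x ^ ((1 : ℝ)/2)) 2, ← ENNReal.rpow_mul]
    norm_num
  have hsq : ENNReal.ofReal Jr ^ (2 : ℕ) ≤ ENNReal.ofReal (1 / (2 * ε)) * Q := by
    calc ENNReal.ofReal Jr ^ (2 : ℕ)
        ≤ (ENNReal.ofReal (1 / (2 * ε)) ^ ((1 : ℝ)/2) * Q ^ ((1 : ℝ)/2)) ^ (2 : ℕ) :=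
          pow_le_pow_left' hAleq 2
      _ = ENNReal.ofReal (1 / (2 * ε)) * Q := by rw [mul_pow, hhalf, hhalf]
  -- lower bound for the sojourn time
  have hQ2 : Q + Q ≤ sojournTime H ψ := by
    have hIio := lintegral_sq_Iio_eq H hH ψ
    have hdisj : Disjoint (Set.Iio (0 : ℝ)) (Set.Ioi (0 : ℝ)) :=
      (Set.Iic_disjoint_Ioi le_rfl).mono_left Set.Iio_subset_Iic_self
    calc Q + Q
        = (∫⁻ t in Set.Iio (0 : ℝ), ENNReal.ofReal (‖f t‖ ^ 2))
          + (∫⁻ t in Set.Ioi (0 : ℝ), ENNReal.ofReal (‖f t‖ ^ 2)) := by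
          rw [hQ, hIio]
      _ = ∫⁻ t in Set.Iio (0 : ℝ) ∪ Set.Ioi (0 : ℝ), ENNReal.ofReal (‖f t‖ ^ 2) :=
          (MeasureTheory.lintegral_union measurableSet_Ioi hdisj).symm
      _ ≤ ∫⁻ t : ℝ, ENNReal.ofReal (‖f t‖ ^ 2) := MeasureTheory.setLIntegral_le_lintegral _ _
      _ = sojournTime H ψ := rfl
  -- final computation
  have hval : (1 / ε) * (2 * ε * I0) ^ 2 = 4 * ε * I0 ^ 2 := by
    field_simp
    ring
  have hI2 : I0 ^ 2 ≤ Jr ^ 2 := by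
    rw [← _root_.sq_abs I0]
    exact pow_le_pow_left₀ (abs_nonneg _) habs 2
  calc ENNReal.ofReal ((1 / ε) * (2 * ε * I0) ^ 2)
      = ENNReal.ofReal (4 * ε * I0 ^ 2) := by rw [hval]
    _ ≤ ENNReal.ofReal (4 * ε * Jr ^ 2) :=
        ENNReal.ofReal_le_ofReal (mul_le_mul_of_nonneg_left hI2 (by positivity))
    _ = ENNReal.ofReal (4 * ε) * ENNReal.ofReal Jr ^ (2 : ℕ) := by
        rw [ENNReal.ofReal_mul (by positivity), ENNReal.ofReal_pow hJr0]
    _ ≤ ENNReal.ofReal (4 * ε) * (ENNReal.ofReal (1 / (2 * ε)) * Q) :=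
        mul_le_mul_right hsq _
    _ = (ENNReal.ofReal (4 * ε) * ENNReal.ofReal (1 / (2 * ε))) * Q := (mul_assoc _ _ _).symm
    _ = ENNReal.ofReal 2 * Q := by
        rw [← ENNReal.ofReal_mul (by positivity)]
        congr 1
        field_simp
        ring
    _ = Q + Q := by rw [ENNReal.ofReal_ofNat, two_mul]
    _ ≤ sojournTime H ψ := hQ2
end

section
/- Let μ be a Borel probability measure on ℝ with Fourier transform μ̂(t) = ∫_ℝ e^{−ixt} dμ(x). Then for every λ ∈ ℝ and ε > 0, (∫_ℝ ε/((x−λ)² + ε²) dμ(x))² ≤ (1/(4ε)) ∫_ℝ |μ̂(t)|² dt (the right-hand side being +∞ if μ̂ ∉ L²(ℝ)). -/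
open MeasureTheory Complex Real Set Filter
open scoped ENNReal

lemma laplace_cexp {c : ℂ} (hc : c.re < 0) :
    IntegrableOn (fun t : ℝ => Complex.exp (c * t)) (Ioi (0:ℝ)) ∧
    ∫ t in Ioi (0:ℝ), Complex.exp (c * t) = -c⁻¹ := by
  have hc0 : c ≠ 0 := fun h => by simp [h] at hc
  have hnorm : ∀ t : ℝ, ‖Complex.exp (c * t)‖ = Real.exp (c.re * t) := by
    intro t
    rw [Complex.norm_exp]
    simp [Complex.mul_re]
  have hint : IntegrableOn (fun t : ℝ => Complex.exp (c * t)) (Ioi (0:ℝ)) := by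
    refine Integrable.mono' (exp_neg_integrableOn_Ioi 0 (by linarith : 0 < -c.re)) ?_ ?_
    · exact (Complex.continuous_exp.comp (continuous_const.mul Complex.continuous_ofReal)).aestronglyMeasurable
    · exact Eventually.of_forall fun t => le_of_eq ((hnorm t).trans (by ring_nf))
  refine ⟨hint, ?_⟩
  have D : ∀ x : ℝ, HasDerivAt (fun y : ℝ => Complex.exp (c * y) / c) (Complex.exp (c * x)) x := by
    intro x
    rw [← mul_div_cancel_right₀ (Complex.exp (c * x)) hc0]
    apply ((Complex.hasDerivAt_exp _).comp x _).div_const c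
    simpa only [mul_one, id_eq] using ((hasDerivAt_id (x : ℂ)).const_mul _).comp_ofReal
  have htend : Tendsto (fun y : ℝ => Complex.exp (c * y) / c) atTop (nhds 0) := by
    rw [tendsto_zero_iff_norm_tendsto_zero]
    have h1 : Tendsto (fun t : ℝ => Real.exp (c.re * t) / ‖c‖) atTop (nhds 0) := by
      have := (Real.tendsto_exp_neg_atTop_nhds_zero.comp
        (tendsto_id.const_mul_atTop (by linarith : (0:ℝ) < -c.re))).div_const ‖c‖
      simpa using this
    refine h1.congr fun t => ?_
    rw [norm_div, hnorm t]
  have := integral_Ioi_of_hasDerivAt_of_tendsto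
    (f := fun y : ℝ => Complex.exp (c * y) / c) (f' := fun t : ℝ => Complex.exp (c * t))
    (a := 0) ?_ (fun x _ => D x) hint htend
  · rw [this]; simp
  · exact ((Complex.continuous_exp.comp (continuous_const.mul Complex.continuous_ofReal)).div_const c).continuousWithinAt

lemma laplace_cos {b : ℝ} (hb : 0 < b) (a : ℝ) :
    IntegrableOn (fun t : ℝ => Real.exp (-(b * t)) * Real.cos (a * t)) (Ioi (0:ℝ)) ∧
    ∫ t in Ioi (0:ℝ), Real.exp (-(b * t)) * Real.cos (a * t) = b / (a ^ 2 + b ^ 2) := by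
  set c : ℂ := ⟨-b, a⟩ with hc
  have hcre : c.re = -b := rfl
  have hcim : c.im = a := rfl
  have h := laplace_cexp (c := c) (by rw [hcre]; linarith)
  have hre : ∀ t : ℝ, (Complex.exp (c * t)).re = Real.exp (-(b * t)) * Real.cos (a * t) := by
    intro t
    rw [Complex.exp_re]
    simp [Complex.mul_re, Complex.mul_im, hcre, hcim]
  constructor
  · exact (h.1.re).congr (Eventually.of_forall fun t => hre t)
  · have h2 : ∫ t in Ioi (0:ℝ), Real.exp (-(b * t)) * Real.cos (a * t)
        = (∫ t in Ioi (0:ℝ), Complex.exp (c * t)).re := by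
      have h3 : ∫ t in Ioi (0:ℝ), (Complex.exp (c * t)).re
          = (∫ t in Ioi (0:ℝ), Complex.exp (c * t)).re := integral_re h.1
      rw [← h3]
      exact integral_congr_ae (Eventually.of_forall fun t => (hre t).symm)
    rw [h2, h.2]
    have hns : Complex.normSq c = b ^ 2 + a ^ 2 := by
      simp [Complex.normSq_mk, hc]; ring
    rw [Complex.neg_re, Complex.inv_re, hns, hcre]
    rw [neg_div, neg_neg, add_comm (b^2)]

open scoped ENNReal

set_option maxHeartbeats 1000000 in
/-- For a Borel probability measure `μ` on `ℝ` with Fourier transform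
`μ̂(t) = ∫ e^{−ixt} dμ(x)`, for every `λ ∈ ℝ` and `ε > 0`,
`(∫ ε/((x−λ)² + ε²) dμ(x))² ≤ (1/(4ε)) ∫ |μ̂(t)|² dt`
(the right-hand side, an extended real, being `+∞` if `μ̂ ∉ L²(ℝ)`). -/
theorem sq_integral_poisson_le_lintegral_sq_fourier
    (μ : Measure ℝ) [IsProbabilityMeasure μ] (lam ε : ℝ) (hε : 0 < ε) :
    ENNReal.ofReal ((∫ x, ε / ((x - lam) ^ 2 + ε ^ 2) ∂μ) ^ 2)
      ≤ ENNReal.ofReal (1 / (4 * ε)) *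
        ∫⁻ t : ℝ, ENNReal.ofReal
          (‖∫ x, Complex.exp (-(Complex.I * (x : ℂ) * (t : ℂ))) ∂μ‖ ^ 2) := by
  set F : ℝ → ℂ := fun t => ∫ x, Complex.exp (-(Complex.I * (x : ℂ) * (t : ℂ))) ∂μ with hF
  have hnorm1 : ∀ (x t : ℝ), ‖Complex.exp (-(Complex.I * (x:ℂ) * (t:ℂ)))‖ = 1 := by
    intro x t
    rw [Complex.norm_exp]
    simp [Complex.mul_re, Complex.mul_im]
  have hFle : ∀ t, ‖F t‖ ≤ 1 := by
    intro t
    calc ‖F t‖ ≤ ∫ x, ‖Complex.exp (-(Complex.I * (x:ℂ) * (t:ℂ)))‖ ∂μ :=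
          norm_integral_le_integral_norm _
    _ = 1 := by simp [hnorm1]
  have hFcont : Continuous F := by
    apply continuous_of_dominated (bound := fun _ : ℝ => (1:ℝ))
    · intro t
      exact (Complex.continuous_exp.comp
        (((continuous_const.mul Complex.continuous_ofReal).mul continuous_const).neg)).aestronglyMeasurable
    · exact fun t => Eventually.of_forall fun x => le_of_eq (hnorm1 x t)
    · exact integrable_const 1
    · exact Eventually.of_forall fun x => Complex.continuous_exp.comp
        ((continuous_const.mul Complex.continuous_ofReal).neg)
  set g : ℝ → ℝ := fun t => ∫ x, Real.cos ((x - lam) * t) ∂μ with hg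
  have hgF : ∀ t, |g t| ≤ ‖F t‖ := by
    intro t
    have hIexp : Integrable (fun x : ℝ => Complex.exp (-(Complex.I * (x:ℂ) * (t:ℂ)))) μ := by
      refine Integrable.mono' (integrable_const 1) ((Complex.continuous_exp.comp
        (((continuous_const.mul Complex.continuous_ofReal).mul continuous_const).neg)).aestronglyMeasurable)
        (Eventually.of_forall fun x => le_of_eq (hnorm1 x t))
    have h2 : g t = (Complex.exp (Complex.I * lam * t) * F t).re := by
      rw [hF, ← integral_const_mul]
      have h3 : ∫ x, (Complex.exp (Complex.I*lam*t) * Complex.exp (-(Complex.I*(x:ℂ)*t))).re ∂μ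
          = (∫ x, Complex.exp (Complex.I*lam*t) * Complex.exp (-(Complex.I*(x:ℂ)*t)) ∂μ).re :=
        integral_re (hIexp.const_mul _)
      rw [← h3]
      apply integral_congr_ae (Eventually.of_forall fun x => ?_)
      rw [← Complex.exp_add, Complex.exp_re]
      simp [Complex.add_re, Complex.add_im, Complex.mul_re, Complex.mul_im]
      rw [show lam * t + -(x * t) = -((x - lam) * t) by ring, Real.cos_neg]
    rw [h2]
    calc |(Complex.exp (Complex.I * lam * t) * F t).re|
        ≤ ‖Complex.exp (Complex.I * lam * t) * F t‖ := Complex.abs_re_le_norm _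
    _ = ‖F t‖ := by
        rw [norm_mul, Complex.norm_exp]
        simp [Complex.mul_re, Complex.mul_im]
  have hbound_int : IntegrableOn (fun t : ℝ => Real.exp (-(ε*t))) (Ioi (0:ℝ)) := by
    simpa [neg_mul] using exp_neg_integrableOn_Ioi 0 hε
  have hprod : Integrable (fun z : ℝ × ℝ => Real.exp (-(ε * z.2)) * Real.cos ((z.1 - lam) * z.2))
      (μ.prod (volume.restrict (Ioi 0))) := by
    have hasm : AEStronglyMeasurable
        (fun z : ℝ × ℝ => Real.exp (-(ε * z.2)) * Real.cos ((z.1 - lam) * z.2))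
        (μ.prod (volume.restrict (Ioi 0))) := Continuous.aestronglyMeasurable
      ((Real.continuous_exp.comp ((continuous_const.mul continuous_snd).neg)).mul
        (Real.continuous_cos.comp ((continuous_fst.sub continuous_const).mul continuous_snd)))
    rw [integrable_prod_iff hasm]
    constructor
    · refine Eventually.of_forall fun x => Integrable.mono' hbound_int
        (Continuous.aestronglyMeasurable (by fun_prop))
        (Eventually.of_forall fun t => ?_)
      show ‖Real.exp (-(ε * t)) * Real.cos ((x - lam) * t)‖ ≤ Real.exp (-(ε * t))
      rw [Real.norm_eq_abs, abs_mul, Real.abs_exp]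
      exact mul_le_of_le_one_right (Real.exp_pos _).le (Real.abs_cos_le_one _)
    · refine Integrable.mono' (integrable_const (1/ε)) hasm.norm.integral_prod_right'
        (Eventually.of_forall fun x => ?_)
      rw [Real.norm_eq_abs, _root_.abs_of_nonneg (integral_nonneg fun t => norm_nonneg _)]
      have hle : ∫ t in Ioi (0:ℝ), ‖Real.exp (-(ε * t)) * Real.cos ((x - lam) * t)‖
          ≤ ∫ t in Ioi (0:ℝ), Real.exp (-(ε * t)) := by
        refine integral_mono_of_nonneg (Eventually.of_forall fun t => norm_nonneg _) hbound_int
          (Eventually.of_forall fun t => ?_)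
        show ‖Real.exp (-(ε * t)) * Real.cos ((x - lam) * t)‖ ≤ Real.exp (-(ε * t))
        rw [Real.norm_eq_abs, abs_mul, Real.abs_exp]
        exact mul_le_of_le_one_right (Real.exp_pos _).le (Real.abs_cos_le_one _)
      refine hle.trans (le_of_eq ?_)
      have h := (laplace_cos hε 0).2
      simp only [zero_mul, Real.cos_zero, mul_one] at h
      rw [h]
      rw [show (0:ℝ)^2 + ε^2 = ε * ε by ring]
      rw [div_mul_eq_div_div]
      field_simp
  have hA : ∫ x, ε / ((x - lam)^2 + ε^2) ∂μ = ∫ t in Ioi (0:ℝ), Real.exp (-(ε*t)) * g t := by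
    have hswap := integral_integral_swap
      (f := fun (x t : ℝ) => Real.exp (-(ε*t)) * Real.cos ((x - lam)*t)) hprod
    calc ∫ x, ε / ((x - lam)^2 + ε^2) ∂μ
        = ∫ x, (∫ t in Ioi (0:ℝ), Real.exp (-(ε*t)) * Real.cos ((x-lam)*t)) ∂μ := by
          exact integral_congr_ae (Eventually.of_forall fun x => ((laplace_cos hε (x - lam)).2).symm)
      _ = ∫ t in Ioi (0:ℝ), ∫ x, Real.exp (-(ε*t)) * Real.cos ((x-lam)*t) ∂μ := hswap
      _ = ∫ t in Ioi (0:ℝ), Real.exp (-(ε*t)) * g t :=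
          integral_congr_ae (Eventually.of_forall fun t => integral_const_mul _ _)
  have hInt_g : Integrable (fun t => Real.exp (-(ε*t)) * g t) (volume.restrict (Ioi 0)) := by
    have h := hprod.integral_prod_right
    refine h.congr (Eventually.of_forall fun t => ?_)
    show (∫ x, Real.exp (-(ε*t)) * Real.cos ((x - lam) * t) ∂μ) = Real.exp (-(ε*t)) * g t
    exact integral_const_mul _ _
  have hInt_RHS : Integrable (fun t => Real.exp (-(ε*t)) * ‖F t‖) (volume.restrict (Ioi 0)) := by
    refine Integrable.mono' hbound_int
      (Continuous.aestronglyMeasurable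
        ((Real.continuous_exp.comp ((continuous_const.mul continuous_id).neg)).mul hFcont.norm))
      (Eventually.of_forall fun t => ?_)
    rw [Real.norm_eq_abs, abs_mul, Real.abs_exp, _root_.abs_of_nonneg (norm_nonneg _)]
    exact mul_le_of_le_one_right (Real.exp_pos _).le (hFle t)
  have hAle : ∫ x, ε / ((x-lam)^2+ε^2) ∂μ ≤ ∫ t in Ioi (0:ℝ), Real.exp (-(ε*t)) * ‖F t‖ := by
    rw [hA]
    refine integral_mono hInt_g hInt_RHS fun t => ?_
    exact mul_le_mul_of_nonneg_left ((le_abs_self _).trans (hgF t)) (Real.exp_pos _).le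
  have hA0 : 0 ≤ ∫ x, ε / ((x - lam)^2 + ε^2) ∂μ :=
    integral_nonneg fun x => by positivity
  set f1 : ℝ → ℝ≥0∞ := fun t => ENNReal.ofReal (Real.exp (-(ε*t))) with hf1d
  set f2 : ℝ → ℝ≥0∞ := fun t => ENNReal.ofReal ‖F t‖ with hf2d
  have step1 : ENNReal.ofReal (∫ x, ε / ((x - lam)^2 + ε^2) ∂μ)
      ≤ ∫⁻ t in Ioi (0:ℝ), f1 t * f2 t := by
    calc ENNReal.ofReal (∫ x, ε / ((x - lam)^2 + ε^2) ∂μ)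
        ≤ ENNReal.ofReal (∫ t in Ioi (0:ℝ), Real.exp (-(ε*t)) * ‖F t‖) :=
          ENNReal.ofReal_le_ofReal hAle
      _ = ∫⁻ t in Ioi (0:ℝ), ENNReal.ofReal (Real.exp (-(ε*t)) * ‖F t‖) :=
          ofReal_integral_eq_lintegral_ofReal hInt_RHS
            (Eventually.of_forall fun t => by positivity)
      _ = ∫⁻ t in Ioi (0:ℝ), f1 t * f2 t :=
          lintegral_congr fun t => ENNReal.ofReal_mul (Real.exp_pos _).le
  have hpq : Real.HolderConjugate 2 2 := Real.HolderConjugate.two_two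
  have hf1m : AEMeasurable f1 (volume.restrict (Ioi 0)) :=
    (ENNReal.continuous_ofReal.comp (Real.continuous_exp.comp
      ((continuous_const.mul continuous_id).neg))).measurable.aemeasurable
  have hf2m : AEMeasurable f2 (volume.restrict (Ioi 0)) :=
    (ENNReal.continuous_ofReal.comp hFcont.norm).measurable.aemeasurable
  have holder' := ENNReal.lintegral_mul_le_Lp_mul_Lq (volume.restrict (Ioi 0)) hpq hf1m hf2m
  have holder : (∫⁻ t in Ioi (0:ℝ), f1 t * f2 t)
      ≤ (∫⁻ t in Ioi (0:ℝ), f1 t ^ (2:ℝ)) ^ (1/(2:ℝ))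
        * (∫⁻ t in Ioi (0:ℝ), f2 t ^ (2:ℝ)) ^ (1/(2:ℝ)) := by
    simpa [Pi.mul_apply] using holder'
  have hrpow : ∀ x : ℝ≥0∞, x ^ (2:ℝ) = x ^ (2:ℕ) := fun x => by
    rw [← ENNReal.rpow_natCast]; norm_num
  have hX : (∫⁻ t in Ioi (0:ℝ), f1 t ^ (2:ℝ)) = ENNReal.ofReal (1/(2*ε)) := by
    have hptw : ∀ t : ℝ, f1 t ^ (2:ℝ) = ENNReal.ofReal (Real.exp (-(2*ε*t))) := by
      intro t
      rw [hrpow, hf1d]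
      rw [← ENNReal.ofReal_pow (Real.exp_pos _).le]
      congr 1
      rw [← Real.exp_nat_mul]
      ring_nf
    rw [lintegral_congr fun t => hptw t]
    have hint2 : IntegrableOn (fun t : ℝ => Real.exp (-(2*ε*t))) (Ioi (0:ℝ)) := by
      simpa [neg_mul, mul_assoc] using exp_neg_integrableOn_Ioi 0 (by linarith : (0:ℝ) < 2*ε)
    rw [← ofReal_integral_eq_lintegral_ofReal hint2
      (Eventually.of_forall fun t => (Real.exp_pos _).le)]
    congr 1
    have h := (laplace_cos (by linarith : (0:ℝ) < 2*ε) 0).2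
    simp only [zero_mul, Real.cos_zero, mul_one] at h
    rw [show (fun t : ℝ => Real.exp (-(2*ε*t))) = fun t : ℝ => Real.exp (-(2*ε*t)) from rfl]
    rw [h]
    rw [show (0:ℝ)^2 + (2*ε)^2 = (2*ε) * (2*ε) by ring, div_mul_eq_div_div]
    field_simp
  have hY : (∫⁻ t in Ioi (0:ℝ), f2 t ^ (2:ℝ))
      = ∫⁻ t in Ioi (0:ℝ), ENNReal.ofReal (‖F t‖^2) := by
    refine lintegral_congr fun t => ?_
    rw [hrpow, hf2d, ← ENNReal.ofReal_pow (norm_nonneg _)]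
  have haux : ∀ x : ℝ≥0∞, x ^ (1/(2:ℝ)) * x ^ (1/(2:ℝ)) = x := fun x => by
    rw [← pow_two, ← hrpow, ← ENNReal.rpow_mul]
    norm_num
  have key : ENNReal.ofReal ((∫ x, ε / ((x - lam)^2 + ε^2) ∂μ)^2)
      ≤ ENNReal.ofReal (1/(2*ε)) * ∫⁻ t in Ioi (0:ℝ), ENNReal.ofReal (‖F t‖^2) := by
    calc ENNReal.ofReal ((∫ x, ε / ((x - lam)^2 + ε^2) ∂μ)^2)
        = ENNReal.ofReal (∫ x, ε / ((x - lam)^2 + ε^2) ∂μ)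
          * ENNReal.ofReal (∫ x, ε / ((x - lam)^2 + ε^2) ∂μ) := by
          rw [← ENNReal.ofReal_mul hA0, ← pow_two]
      _ ≤ ((∫⁻ t in Ioi (0:ℝ), f1 t ^ (2:ℝ)) ^ (1/(2:ℝ))
            * (∫⁻ t in Ioi (0:ℝ), f2 t ^ (2:ℝ)) ^ (1/(2:ℝ)))
          * ((∫⁻ t in Ioi (0:ℝ), f1 t ^ (2:ℝ)) ^ (1/(2:ℝ))
            * (∫⁻ t in Ioi (0:ℝ), f2 t ^ (2:ℝ)) ^ (1/(2:ℝ))) :=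
          mul_le_mul' (step1.trans holder) (step1.trans holder)
      _ = (∫⁻ t in Ioi (0:ℝ), f1 t ^ (2:ℝ)) * (∫⁻ t in Ioi (0:ℝ), f2 t ^ (2:ℝ)) := by
          rw [mul_mul_mul_comm, haux, haux]
      _ = ENNReal.ofReal (1/(2*ε)) * ∫⁻ t in Ioi (0:ℝ), ENNReal.ofReal (‖F t‖^2) := by
          rw [hX, hY]
  have hsym : ∫⁻ t in Iio (0:ℝ), ENNReal.ofReal (‖F t‖^2)
      = ∫⁻ t in Ioi (0:ℝ), ENNReal.ofReal (‖F t‖^2) := by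
    have hneg : ∀ t : ℝ, ‖F (-t)‖ = ‖F t‖ := by
      intro t
      have h1 : F (-t) = (starRingEnd ℂ) (F t) := by
        rw [hF]
        simp only
        rw [← integral_conj]
        refine integral_congr_ae (Eventually.of_forall fun x => ?_)
        show Complex.exp (-(Complex.I * (x:ℂ) * ((-t : ℝ):ℂ)))
          = (starRingEnd ℂ) (Complex.exp (-(Complex.I * (x:ℂ) * (t:ℂ))))
        rw [← Complex.exp_conj]
        congr 1
        simp [map_mul, Complex.conj_I, Complex.conj_ofReal, Complex.ofReal_neg]
      rw [h1, RCLike.norm_conj]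
    have hpre : (Neg.neg ⁻¹' (Iio (0:ℝ))) = Ioi 0 := by ext y; simp
    have hmap : (volume : Measure ℝ).restrict (Iio 0)
        = Measure.map Neg.neg ((volume : Measure ℝ).restrict (Ioi 0)) := by
      conv_lhs => rw [← Measure.map_neg_eq_self (volume : Measure ℝ)]
      rw [measurableEmbedding_neg.restrict_map, hpre]
    rw [hmap, measurableEmbedding_neg.lintegral_map]
    exact lintegral_congr fun t => by rw [show Neg.neg t = -t from rfl, hneg]
  refine key.trans ?_
  have hsplit : (2:ℝ≥0∞) * ∫⁻ t in Ioi (0:ℝ), ENNReal.ofReal (‖F t‖^2)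
      ≤ ∫⁻ t : ℝ, ENNReal.ofReal (‖F t‖^2) := by
    have hunion := lintegral_union (f := fun t : ℝ => ENNReal.ofReal (‖F t‖^2))
      (μ := volume) measurableSet_Ioi ((Set.Iic_disjoint_Ioi (le_refl (0:ℝ))).mono_left Set.Iio_subset_Iic_self)
    calc (2:ℝ≥0∞) * ∫⁻ t in Ioi (0:ℝ), ENNReal.ofReal (‖F t‖^2)
        = (∫⁻ t in Iio (0:ℝ), ENNReal.ofReal (‖F t‖^2))
          + ∫⁻ t in Ioi (0:ℝ), ENNReal.ofReal (‖F t‖^2) := by rw [two_mul, hsym]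
      _ = ∫⁻ t in Iio (0:ℝ) ∪ Ioi 0, ENNReal.ofReal (‖F t‖^2) := hunion.symm
      _ ≤ ∫⁻ t : ℝ, ENNReal.ofReal (‖F t‖^2) := by
          conv_rhs => rw [← Measure.restrict_univ (μ := (volume : Measure ℝ))]
          exact lintegral_mono_set (Set.subset_univ _)
  have hcoef : ENNReal.ofReal (1/(2*ε)) = ENNReal.ofReal (1/(4*ε)) * 2 := by
    rw [show (2:ℝ≥0∞) = ENNReal.ofReal 2 by norm_num, ← ENNReal.ofReal_mul (by positivity)]
    congr 1
    field_simp
    ring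
  calc ENNReal.ofReal (1/(2*ε)) * ∫⁻ t in Ioi (0:ℝ), ENNReal.ofReal (‖F t‖^2)
      = ENNReal.ofReal (1/(4*ε)) * ((2:ℝ≥0∞) * ∫⁻ t in Ioi (0:ℝ), ENNReal.ofReal (‖F t‖^2)) := by
        rw [hcoef, mul_assoc]
    _ ≤ ENNReal.ofReal (1/(4*ε)) * ∫⁻ t : ℝ, ENNReal.ofReal (‖F t‖^2) :=
        mul_le_mul_right hsplit _
end

section
/- Let μ be a Borel probability measure on ℝ, λ ∈ ℝ, and g(ε) := ∫_ℝ 2ε²/((x−λ)² + ε²) dμ(x) for ε > 0. If inf{ε ∈ (0,∞) : g(ε) ≥ 1} = 0, then μ({λ}) ≥ 1/2. -/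
open MeasureTheory Filter Topology
open scoped ENNReal

/-- `g(ε) = ∫ 2ε²/((x−λ)² + ε²) dμ(x)`. -/
noncomputable def lavineG (μ : Measure ℝ) (lam : ℝ) (ε : ℝ) : ℝ :=
  ∫ x, 2 * ε ^ 2 / ((x - lam) ^ 2 + ε ^ 2) ∂μ

lemma lavine_cont (lam ε : ℝ) (hε : ε ≠ 0) :
    Continuous (fun x : ℝ => 2 * ε ^ 2 / ((x - lam) ^ 2 + ε ^ 2)) := by
  apply continuous_const.div (by continuity)
  intro x
  positivity

lemma lavine_bound (lam ε x : ℝ) : |2 * ε ^ 2 / ((x - lam) ^ 2 + ε ^ 2)| ≤ 2 := by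
  rcases eq_or_ne ε 0 with rfl | hε
  · simp
  · rw [abs_of_nonneg (by positivity), div_le_iff₀ (by positivity)]
    nlinarith [sq_nonneg (x - lam)]

lemma lavine_integrable (μ : Measure ℝ) [IsProbabilityMeasure μ] (lam ε : ℝ) (hε : ε ≠ 0) :
    Integrable (fun x : ℝ => 2 * ε ^ 2 / ((x - lam) ^ 2 + ε ^ 2)) μ := by
  refine (integrable_const (2 : ℝ)).mono' ((lavine_cont lam ε hε).aestronglyMeasurable) ?_
  exact Filter.Eventually.of_forall fun x => lavine_bound lam ε x

/-- If the energy width `inf{ε ∈ (0,∞) : g(ε) ≥ 1}` vanishes, then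
`μ({λ}) ≥ 1/2`. -/
theorem atom_of_energyWidth_eq_zero (μ : Measure ℝ) [IsProbabilityMeasure μ] (lam : ℝ)
    (h : sInf {ε : ℝ | 0 < ε ∧ 1 ≤ lavineG μ lam ε} = 0) :
    ENNReal.ofReal (1 / 2) ≤ μ {lam} := by
  set S := {ε : ℝ | 0 < ε ∧ 1 ≤ lavineG μ lam ε} with hS
  -- Step 1: S is nonempty, since g(n) → 2 as n → ∞.
  have hSne : S.Nonempty := by
    have hg : Tendsto (fun n : ℕ => lavineG μ lam (n + 1)) atTop (𝓝 2) := by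
      have h2 : (2 : ℝ) = ∫ _x, (2 : ℝ) ∂μ := by simp
      rw [h2]
      apply tendsto_integral_of_dominated_convergence (fun _ => (2 : ℝ))
      · intro n
        exact (lavine_cont lam _ (by positivity)).aestronglyMeasurable
      · exact integrable_const 2
      · intro n
        exact Filter.Eventually.of_forall fun x => lavine_bound lam _ x
      · refine Filter.Eventually.of_forall fun x => ?_
        set c := (x - lam) ^ 2 with hc
        have hc0 : 0 ≤ c := sq_nonneg _
        have hlim : Tendsto (fun n : ℕ => 2 - 2 * c / (c + ((n : ℝ) + 1) ^ 2)) atTop (𝓝 2) := by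
          have hd : Tendsto (fun n : ℕ => c + ((n : ℝ) + 1) ^ 2) atTop atTop := by
            apply tendsto_atTop_add_const_left
            refine tendsto_atTop_mono (fun n => ?_) tendsto_natCast_atTop_atTop
            nlinarith [Nat.cast_nonneg (α := ℝ) n]
          have := Tendsto.div_atTop (tendsto_const_nhds (x := 2 * c)) hd
          have h2 := (tendsto_const_nhds (x := (2:ℝ))).sub this
          simpa using h2
        refine hlim.congr fun n => ?_
        have hpos : 0 < c + ((n : ℝ) + 1) ^ 2 := by positivity
        field_simp
        ring
    have : ∀ᶠ n : ℕ in atTop, 1 ≤ lavineG μ lam (n + 1) :=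
      hg.eventually (eventually_ge_nhds (by norm_num))
    rcases this.exists with ⟨n, hn⟩
    exact ⟨n + 1, by positivity, hn⟩
  -- Step 2: get a sequence in S tending to 0.
  have hbdd : BddBelow S := ⟨0, fun x hx => le_of_lt hx.1⟩
  obtain ⟨u, -, hu, huS⟩ := exists_seq_tendsto_sInf hSne hbdd
  rw [h] at hu
  -- Step 3: g(u n) → 2 * μ {lam}.toReal
  have hpos : ∀ n, 0 < u n := fun n => (huS n).1
  have hlim : Tendsto (fun n => lavineG μ lam (u n)) atTop
      (𝓝 (∫ x, Set.indicator {lam} (fun _ => (2:ℝ)) x ∂μ)) := by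
    apply tendsto_integral_of_dominated_convergence (fun _ => (2 : ℝ))
    · intro n
      exact (lavine_cont lam _ (hpos n).ne').aestronglyMeasurable
    · exact integrable_const 2
    · intro n
      exact Filter.Eventually.of_forall fun x => lavine_bound lam _ x
    · refine Filter.Eventually.of_forall fun x => ?_
      rcases eq_or_ne x lam with rfl | hx
      · simp only [Set.indicator_of_mem (Set.mem_singleton x)]
        have heq : (fun n => 2 * (u n) ^ 2 / ((x - x) ^ 2 + (u n) ^ 2)) = fun _ => (2:ℝ) := by
          funext n
          have h0 : (u n) ^ 2 ≠ 0 := pow_ne_zero 2 (hpos n).ne'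
          field_simp
          ring
        rw [heq]
        exact tendsto_const_nhds
      · simp only [Set.indicator_of_notMem (by simpa using hx : x ∉ ({lam} : Set ℝ))]
        have hc : (0:ℝ) < (x - lam) ^ 2 := by
          have : x - lam ≠ 0 := sub_ne_zero.mpr hx
          positivity
        have hnum : Tendsto (fun n => 2 * (u n) ^ 2) atTop (𝓝 0) := by
          have := (hu.pow 2)
          simpa using (tendsto_const_nhds (x := (2:ℝ))).mul this
        have hden : Tendsto (fun n => (x - lam) ^ 2 + (u n) ^ 2) atTop (𝓝 ((x - lam) ^ 2)) := by
          have := (tendsto_const_nhds (x := (x - lam) ^ 2)).add (hu.pow 2)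
          simpa using this
        have := hnum.div hden hc.ne'
        simpa [Pi.div_def] using this
  have hval : (∫ x, Set.indicator {lam} (fun _ => (2:ℝ)) x ∂μ) = 2 * (μ {lam}).toReal := by
    rw [integral_indicator_const _ (measurableSet_singleton lam)]
    simp [mul_comm]
    rfl
  rw [hval] at hlim
  have h1 : 1 ≤ 2 * (μ {lam}).toReal :=
    le_of_tendsto_of_tendsto' tendsto_const_nhds hlim fun n => (huS n).2
  rw [ENNReal.ofReal_le_iff_le_toReal (measure_ne_top μ _)]
  linarith
end

section
/- Let μ be a Borel probability measure on ℝ and λ ∈ ℝ. Then for every ε > 0, 1 ≤ (1/ε)·(∫_ℝ (x−λ)² dμ(x) + ε²)·∫_ℝ ε/((x−λ)² + ε²) dμ(x). In particular, if V := ∫_ℝ (x−λ)² dμ(x) is finite and positive, then taking ε = √V gives ∫_ℝ 2V/((x−λ)² + V) dμ(x) ≥ 1. -/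
open MeasureTheory
open scoped ENNReal

lemma aux_core (μ : Measure ℝ) [IsProbabilityMeasure μ] (lam ε : ℝ) (hε : 0 < ε) :
    (1 : ℝ≥0∞) ≤ (∫⁻ x, ENNReal.ofReal ((x - lam) ^ 2 + ε ^ 2) ∂μ) *
      ∫⁻ x, ENNReal.ofReal (((x - lam) ^ 2 + ε ^ 2)⁻¹) ∂μ := by
  set h : ℝ → ℝ := fun x => (x - lam) ^ 2 + ε ^ 2 with hh
  have hpos : ∀ x, 0 < h x := fun x => by positivity
  have hcont : Continuous h := by continuity
  set f : ℝ → ℝ≥0∞ := fun x => ENNReal.ofReal (Real.sqrt (h x)) with hf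
  set g : ℝ → ℝ≥0∞ := fun x => ENNReal.ofReal ((Real.sqrt (h x))⁻¹) with hg
  have hfm : AEMeasurable f μ :=
    ((hcont.sqrt).measurable.ennreal_ofReal).aemeasurable
  have hgm : AEMeasurable g μ :=
    (((hcont.sqrt).inv₀ (fun x => (Real.sqrt_pos.mpr (hpos x)).ne')).measurable.ennreal_ofReal).aemeasurable
  have hfg : ∀ x, f x * g x = 1 := by
    intro x
    have hs : 0 < Real.sqrt (h x) := Real.sqrt_pos.mpr (hpos x)
    rw [hf, hg, ← ENNReal.ofReal_mul hs.le, mul_inv_cancel₀ hs.ne', ENNReal.ofReal_one]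
  have holder := ENNReal.lintegral_mul_le_Lp_mul_Lq μ (Real.HolderConjugate.two_two : Real.HolderConjugate 2 2)
    hfm hgm
  have hone : (∫⁻ x, (f * g) x ∂μ) = 1 := by
    simp only [Pi.mul_apply, hfg]
    simp
  have hA : (∫⁻ x, f x ^ (2:ℝ) ∂μ) = ∫⁻ x, ENNReal.ofReal (h x) ∂μ := by
    refine lintegral_congr fun x => ?_
    rw [hf, ENNReal.ofReal_rpow_of_nonneg (Real.sqrt_nonneg _) (by norm_num)]
    congr 1
    rw [Real.rpow_two, Real.sq_sqrt (hpos x).le]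
  have hB : (∫⁻ x, g x ^ (2:ℝ) ∂μ) = ∫⁻ x, ENNReal.ofReal ((h x)⁻¹) ∂μ := by
    refine lintegral_congr fun x => ?_
    rw [hg, ENNReal.ofReal_rpow_of_nonneg (by positivity) (by norm_num)]
    congr 1
    rw [Real.rpow_two, ← Real.sqrt_inv, Real.sq_sqrt (by positivity)]
  rw [hone, hA, hB] at holder
  show (1:ℝ≥0∞) ≤ (∫⁻ x, ENNReal.ofReal (h x) ∂μ) * ∫⁻ x, ENNReal.ofReal ((h x)⁻¹) ∂μ
  set A := ∫⁻ x, ENNReal.ofReal (h x) ∂μ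
  set B := ∫⁻ x, ENNReal.ofReal ((h x)⁻¹) ∂μ
  have h2 : A ^ (1/2:ℝ) * B ^ (1/2:ℝ) = (A * B) ^ (1/2:ℝ) :=
    (ENNReal.mul_rpow_of_nonneg _ _ (by norm_num)).symm
  rw [h2] at holder
  have := ENNReal.rpow_le_rpow holder (by norm_num : (0:ℝ) ≤ 2)
  rwa [ENNReal.one_rpow, ← ENNReal.rpow_mul, one_div, inv_mul_cancel₀ (by norm_num : (2:ℝ) ≠ 0),
    ENNReal.rpow_one] at this

/-- For a Borel probability measure `μ` on `ℝ`, `λ ∈ ℝ` and `ε > 0`,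
`1 ≤ (1/ε)·(∫ (x−λ)² dμ + ε²)·∫ ε/((x−λ)² + ε²) dμ` (stated in `ℝ≥0∞` so that an
infinite second moment is allowed); in particular, if `V := ∫ (x−λ)² dμ` is finite and
positive, then taking `ε = √V` gives `∫ 2V/((x−λ)² + V) dμ ≥ 1`. -/
theorem one_le_second_moment_mul_poisson (μ : Measure ℝ) [IsProbabilityMeasure μ]
    (lam : ℝ) :
    (∀ ε : ℝ, 0 < ε →
      (1 : ℝ≥0∞) ≤ ENNReal.ofReal (1 / ε) *
        ((∫⁻ x, ENNReal.ofReal ((x - lam) ^ 2) ∂μ) + ENNReal.ofReal (ε ^ 2)) *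
        ENNReal.ofReal (∫ x, ε / ((x - lam) ^ 2 + ε ^ 2) ∂μ)) ∧
    (∀ V : ℝ, 0 < V →
      (∫⁻ x, ENNReal.ofReal ((x - lam) ^ 2) ∂μ) = ENNReal.ofReal V →
      1 ≤ ∫ x, 2 * V / ((x - lam) ^ 2 + V) ∂μ) := by
  have main : ∀ ε : ℝ, 0 < ε →
      (1 : ℝ≥0∞) ≤ ENNReal.ofReal (1 / ε) *
        ((∫⁻ x, ENNReal.ofReal ((x - lam) ^ 2) ∂μ) + ENNReal.ofReal (ε ^ 2)) *
        ENNReal.ofReal (∫ x, ε / ((x - lam) ^ 2 + ε ^ 2) ∂μ) := by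
    intro ε hε
    have hpos : ∀ x : ℝ, 0 < (x - lam) ^ 2 + ε ^ 2 := fun x => by positivity
    have hcont : Continuous fun x : ℝ => ε / ((x - lam) ^ 2 + ε ^ 2) :=
      continuous_const.div (by continuity) (fun x => (hpos x).ne')
    -- integrability
    have hint : Integrable (fun x : ℝ => ε / ((x - lam) ^ 2 + ε ^ 2)) μ := by
      refine Integrable.mono' (integrable_const (1/ε)) hcont.aestronglyMeasurable
        (Filter.Eventually.of_forall fun x => ?_)
      rw [Real.norm_eq_abs, abs_of_nonneg (by positivity)]
      rw [div_le_div_iff₀ (hpos x) hε]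
      nlinarith [sq_nonneg (x - lam)]
    have hnn : 0 ≤ᵐ[μ] fun x : ℝ => ε / ((x - lam) ^ 2 + ε ^ 2) :=
      Filter.Eventually.of_forall fun x => by positivity
    have hofReal : ENNReal.ofReal (∫ x, ε / ((x - lam) ^ 2 + ε ^ 2) ∂μ) =
        ENNReal.ofReal ε * ∫⁻ x, ENNReal.ofReal (((x - lam) ^ 2 + ε ^ 2)⁻¹) ∂μ := by
      rw [ofReal_integral_eq_lintegral_ofReal hint hnn]
      rw [← lintegral_const_mul' _ _ ENNReal.ofReal_ne_top]
      refine lintegral_congr fun x => ?_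
      rw [← ENNReal.ofReal_mul hε.le, div_eq_mul_inv]
    have hA : (∫⁻ x, ENNReal.ofReal ((x - lam) ^ 2 + ε ^ 2) ∂μ) =
        (∫⁻ x, ENNReal.ofReal ((x - lam) ^ 2) ∂μ) + ENNReal.ofReal (ε ^ 2) := by
      have : ∀ x : ℝ, ENNReal.ofReal ((x - lam) ^ 2 + ε ^ 2) =
          ENNReal.ofReal ((x - lam) ^ 2) + ENNReal.ofReal (ε ^ 2) := fun x =>
        ENNReal.ofReal_add (by positivity) (by positivity)
      simp only [this]
      rw [lintegral_add_right _ measurable_const, lintegral_const, measure_univ, mul_one]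
    have hcore := aux_core μ lam ε hε
    rw [hA] at hcore
    calc (1 : ℝ≥0∞) ≤ ((∫⁻ x, ENNReal.ofReal ((x - lam) ^ 2) ∂μ) + ENNReal.ofReal (ε ^ 2)) *
          ∫⁻ x, ENNReal.ofReal (((x - lam) ^ 2 + ε ^ 2)⁻¹) ∂μ := hcore
      _ = ENNReal.ofReal (1 / ε) *
          ((∫⁻ x, ENNReal.ofReal ((x - lam) ^ 2) ∂μ) + ENNReal.ofReal (ε ^ 2)) *
          ENNReal.ofReal (∫ x, ε / ((x - lam) ^ 2 + ε ^ 2) ∂μ) := by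
        rw [hofReal]
        have h1 : ENNReal.ofReal (1 / ε) * ENNReal.ofReal ε = 1 := by
          rw [← ENNReal.ofReal_mul (by positivity), one_div, inv_mul_cancel₀ hε.ne',
            ENNReal.ofReal_one]
        have h2 : ENNReal.ofReal (1 / ε) *
            ((∫⁻ x, ENNReal.ofReal ((x - lam) ^ 2) ∂μ) + ENNReal.ofReal (ε ^ 2)) *
            (ENNReal.ofReal ε * ∫⁻ x, ENNReal.ofReal (((x - lam) ^ 2 + ε ^ 2)⁻¹) ∂μ) =
            (ENNReal.ofReal (1 / ε) * ENNReal.ofReal ε) *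
            (((∫⁻ x, ENNReal.ofReal ((x - lam) ^ 2) ∂μ) + ENNReal.ofReal (ε ^ 2)) *
            ∫⁻ x, ENNReal.ofReal (((x - lam) ^ 2 + ε ^ 2)⁻¹) ∂μ) := by ring
        rw [h2, h1, one_mul]
  refine ⟨main, ?_⟩
  intro V hV hM
  have hsV : 0 < Real.sqrt V := Real.sqrt_pos.mpr hV
  have hsq : Real.sqrt V ^ 2 = V := Real.sq_sqrt hV.le
  have h1 := main (Real.sqrt V) hsV
  rw [hM, hsq] at h1
  set I : ℝ := ∫ x, Real.sqrt V / ((x - lam) ^ 2 + V) ∂μ with hI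
  have hInn : (0:ℝ) ≤ I :=
    integral_nonneg fun x => by positivity
  have h2 : (1:ℝ≥0∞) ≤ ENNReal.ofReal ((1 / Real.sqrt V) * (V + V) * I) := by
    calc (1:ℝ≥0∞) ≤ _ := h1
      _ = _ := by
        rw [← ENNReal.ofReal_add hV.le hV.le, ← ENNReal.ofReal_mul (by positivity),
          ← ENNReal.ofReal_mul (by positivity)]
  have h3 : (1:ℝ) ≤ (1 / Real.sqrt V) * (V + V) * I := by
    by_contra hc
    push_neg at hc
    exact absurd h2 (not_le.mpr (ENNReal.ofReal_lt_one.mpr hc))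
  have hkey : ∀ x : ℝ, 2 * V / ((x - lam) ^ 2 + V) =
      (1 / Real.sqrt V * (V + V)) * (Real.sqrt V / ((x - lam) ^ 2 + V)) := by
    intro x
    have hpos : (0:ℝ) < (x - lam) ^ 2 + V := by positivity
    field_simp
    nlinarith [Real.sq_sqrt hV.le]
  calc (1:ℝ) ≤ (1 / Real.sqrt V) * (V + V) * I := h3
    _ = ∫ x, (1 / Real.sqrt V * (V + V)) * (Real.sqrt V / ((x - lam) ^ 2 + V)) ∂μ := by
      rw [hI, ← integral_const_mul]
    _ = ∫ x, 2 * V / ((x - lam) ^ 2 + V) ∂μ :=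
      integral_congr_ae (Filter.Eventually.of_forall fun x => (hkey x).symm)
end

section
/- Let H be a bounded self-adjoint operator on a complex Hilbert space 𝓗, ψ a unit vector, P = |ψ⟩⟨ψ| the orthogonal projection onto ℂψ, P^⊥ = 1 − P, and z ∈ ℂ with Im z ≠ 0. Then the operator P^⊥(H − z)P^⊥ restricted to Ran P^⊥ is invertible, ⟨ψ, (H − z)⁻¹ ψ⟩ ≠ 0, and ⟨ψ, (H − z)⁻¹ ψ⟩⁻¹ = ⟨ψ, (H − z)ψ⟩ − F(z), where F(z) := ⟨ψ, H P^⊥ (P^⊥ H P^⊥ − z)⁻¹|_{Ran P^⊥} P^⊥ H ψ⟩. -/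
open MeasureTheory Complex
open scoped ENNReal

variable {𝓗 : Type*} [NormedAddCommGroup 𝓗] [InnerProductSpace ℂ 𝓗] [CompleteSpace 𝓗]

/-- Lavine's energy width `ΔE(H,ψ,λ) = inf{ε ∈ (0,∞) : 2ε·Im⟨ψ, (H−λ−iε)⁻¹ψ⟩ ≥ 1}`. -/
noncomputable def energyWidth (H : 𝓗 →L[ℂ] 𝓗) (ψ : 𝓗) (lam : ℝ) : ℝ :=
  sInf {ε : ℝ | 0 < ε ∧
    1 ≤ 2 * ε * (inner ℂ ψ (resolventOp H ((lam : ℂ) + (ε : ℂ) * Complex.I) ψ) : ℂ).im}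

/-- `Ran P^⊥ = (ℂψ)^⊥`, the orthogonal complement of the line `ℂψ`. -/
noncomputable def perpSpace (ψ : 𝓗) : Submodule ℂ 𝓗 := (ℂ ∙ ψ)ᗮ

set_option synthInstance.maxHeartbeats 400000 in
instance (ψ : 𝓗) : Submodule.HasOrthogonalProjection (perpSpace ψ) :=
  inferInstanceAs (Submodule.HasOrthogonalProjection (ℂ ∙ ψ)ᗮ)

/-- The compression `P^⊥ T P^⊥` of `T` to the subspace `Ran P^⊥`. -/
noncomputable def compress (ψ : 𝓗) (T : 𝓗 →L[ℂ] 𝓗) : perpSpace ψ →L[ℂ] perpSpace ψ :=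
  (perpSpace ψ).orthogonalProjectionOnto ∘L T ∘L (perpSpace ψ).subtypeL

/-- The Feshbach function
`F(z) = ⟨ψ, H P^⊥ (P^⊥HP^⊥ − z)⁻¹|_{Ran P^⊥} P^⊥ H ψ⟩` (via `Ring.inverse`). -/
noncomputable def feshbachF (H : 𝓗 →L[ℂ] 𝓗) (ψ : 𝓗) (z : ℂ) : ℂ :=
  inner ℂ ψ (H ((perpSpace ψ).subtypeL
    ((Ring.inverse (compress ψ H - z • 1)) ((perpSpace ψ).orthogonalProjectionOnto (H ψ)))))

instance (ψ : 𝓗) : CompleteSpace (perpSpace ψ) :=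
  inferInstanceAs (CompleteSpace ((ℂ ∙ ψ)ᗮ : Submodule ℂ 𝓗))

/-- A self-adjoint bounded operator minus a non-real scalar is invertible. -/
theorem aux_isUnit_sub_smul_one {E : Type*} [NormedAddCommGroup E] [InnerProductSpace ℂ E]
    [CompleteSpace E] (T : E →L[ℂ] E) (hT : IsSelfAdjoint T) {z : ℂ} (hz : z.im ≠ 0) :
    IsUnit (T - z • (1 : E →L[ℂ] E)) := by
  have h : z ∉ spectrum ℂ T := by
    intro h
    exact hz (by rw [hT.mem_spectrum_eq_re h, Complex.ofReal_im])
  rw [spectrum.notMem_iff] at h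
  have h2 := h.neg
  rwa [neg_sub, Algebra.algebraMap_eq_smul_one] at h2

/-- The compression of a self-adjoint operator is self-adjoint. -/
theorem aux_isSelfAdjoint_compress (H : 𝓗 →L[ℂ] 𝓗) (hH : IsSelfAdjoint H) (ψ : 𝓗) :
    IsSelfAdjoint (compress ψ H) := by
  rw [ContinuousLinearMap.isSelfAdjoint_iff_isSymmetric]
  intro x y
  simp only [ContinuousLinearMap.coe_coe]
  show (inner ℂ (((perpSpace ψ).orthogonalProjectionOnto) (H (x : 𝓗))) y : ℂ)
      = inner ℂ x (((perpSpace ψ).orthogonalProjectionOnto) (H (y : 𝓗)))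
  rw [Submodule.inner_orthogonalProjectionOnto_eq_of_mem_right,
    Submodule.inner_orthogonalProjectionOnto_eq_of_mem_left]
  exact hH.isSymmetric (x : 𝓗) (y : 𝓗)

/-- **Feshbach / Schur complement formula.** For bounded self-adjoint `H`,
a unit vector `ψ` and `z ∈ ℂ` with `Im z ≠ 0`: the compression of `H − z` to
`Ran P^⊥ = (ℂψ)^⊥` is invertible, `⟨ψ, (H−z)⁻¹ψ⟩ ≠ 0`, and
`⟨ψ, (H−z)⁻¹ψ⟩⁻¹ = ⟨ψ, (H−z)ψ⟩ − F(z)`. -/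
theorem feshbach_formula (H : 𝓗 →L[ℂ] 𝓗) (hH : IsSelfAdjoint H)
    (ψ : 𝓗) (hψ : ‖ψ‖ = 1) (z : ℂ) (hz : z.im ≠ 0) :
    IsUnit (compress ψ H - z • (1 : perpSpace ψ →L[ℂ] perpSpace ψ)) ∧
    (inner ℂ ψ (resolventOp H z ψ) : ℂ) ≠ 0 ∧
    (inner ℂ ψ (resolventOp H z ψ) : ℂ)⁻¹
      = (inner ℂ ψ ((H - z • 1) ψ) : ℂ) - feshbachF H ψ z := by
  classical
  have hS : IsSelfAdjoint (compress ψ H) := aux_isSelfAdjoint_compress H hH ψ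
  have hunitS : IsUnit (compress ψ H - z • (1 : perpSpace ψ →L[ℂ] perpSpace ψ)) :=
    aux_isUnit_sub_smul_one _ hS hz
  refine ⟨hunitS, ?_⟩
  set T : 𝓗 →L[ℂ] 𝓗 := H - z • 1 with hT
  have hunitT : IsUnit T := aux_isUnit_sub_smul_one H hH hz
  set R : 𝓗 →L[ℂ] 𝓗 := resolventOp H z with hRdef
  have hTR : T * R = 1 := Ring.mul_inverse_cancel _ hunitT
  set φ : 𝓗 := R ψ with hφ
  have hTφ : T φ = ψ := by
    have h := congrArg (fun A : 𝓗 →L[ℂ] 𝓗 => A ψ) hTR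
    simpa [ContinuousLinearMap.mul_apply] using h
  set Q := (perpSpace ψ).orthogonalProjectionOnto with hQ
  set α : ℂ := inner ℂ ψ φ with hα
  -- decomposition of φ
  have hdecomp : φ = α • ψ + ((Q φ : 𝓗)) := by
    have h := Submodule.starProjection_add_starProjection_orthogonal (K := ℂ ∙ ψ) φ
    rw [Submodule.starProjection_unit_singleton ℂ hψ] at h
    exact h.symm
  -- Q φ lies in the orthogonal complement of ψ
  have hQφmem : ((Q φ : 𝓗)) ∈ (ℂ ∙ ψ)ᗮ := (Q φ).2
  have hinner0 : (inner ℂ ψ ((Q φ : 𝓗)) : ℂ) = 0 := by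
    have := (Submodule.mem_orthogonal _ _).1 hQφmem ψ (Submodule.mem_span_singleton_self ψ)
    simpa using this
  have hQψ : Q ψ = 0 :=
    Submodule.orthogonalProjectionOnto_orthogonalComplement_singleton_eq_zero ψ
  set S : perpSpace ψ →L[ℂ] perpSpace ψ := compress ψ H - z • 1 with hSdef
  set u : perpSpace ψ := Q (H ψ) with hu
  -- apply Q to T φ = ψ
  have hkey : S (Q φ) = (-α) • u := by
    have h1 : Q (T φ) = 0 := by rw [hTφ]; exact hQψ
    have h2 : Q (T φ) = α • Q (H ψ) + S (Q φ) := by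
      conv_lhs => rw [hdecomp]
      have hcomp : Q (H ((Q φ : 𝓗))) = compress ψ H (Q φ) := rfl
      have hQQφ : Q ((Q φ : 𝓗)) = Q φ :=
        Submodule.orthogonalProjectionOnto_mem_subspace_eq_self (Q φ)
      simp only [hT, ContinuousLinearMap.sub_apply, ContinuousLinearMap.smul_apply,
        ContinuousLinearMap.one_apply, map_add, map_sub, _root_.map_smul, hcomp, hQQφ,
        hSdef, hQψ, smul_zero]
      module
    rw [h1] at h2
    have h4 : α • u + S (Q φ) = 0 := by rw [← h2]
    have h5 := eq_neg_of_add_eq_zero_right h4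
    rw [h5, neg_smul]
  have hQφ : (Q φ) = (-α) • (Ring.inverse S) u := by
    have hST : Ring.inverse S * S = 1 := Ring.inverse_mul_cancel _ hunitS
    have h := congrArg (fun v => (Ring.inverse S) v) hkey
    simp only [_root_.map_smul] at h
    have h' : (Ring.inverse S) (S (Q φ)) = Q φ := by
      have := congrArg (fun A : perpSpace ψ →L[ℂ] perpSpace ψ => A (Q φ)) hST
      simpa [ContinuousLinearMap.mul_apply] using this
    rw [h'] at h
    exact h
  -- apply inner ℂ ψ to T φ = ψ
  have hinnerψψ : (inner ℂ ψ ψ : ℂ) = 1 := by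
    rw [inner_self_eq_norm_sq_to_K, hψ]; norm_num
  have hmain : α * ((inner ℂ ψ (T ψ) : ℂ) - feshbachF H ψ z) = 1 := by
    have h1 : (inner ℂ ψ (T φ) : ℂ) = 1 := by rw [hTφ, hinnerψψ]
    have h2 : (inner ℂ ψ (T φ) : ℂ)
        = α * (inner ℂ ψ (T ψ) : ℂ) + (inner ℂ ψ (H ((Q φ : 𝓗))) : ℂ)
          - z * (inner ℂ ψ ((Q φ : 𝓗)) : ℂ) := by
      conv_lhs => rw [hdecomp]
      simp only [hT, ContinuousLinearMap.sub_apply, ContinuousLinearMap.smul_apply,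
        ContinuousLinearMap.one_apply, map_add, _root_.map_smul, inner_add_right,
        inner_sub_right, inner_smul_right]
      ring
    have h3 : (inner ℂ ψ (H ((Q φ : 𝓗))) : ℂ) = (-α) * feshbachF H ψ z := by
      rw [hQφ]
      have hco : (((-α) • (Ring.inverse S) u : perpSpace ψ) : 𝓗)
          = (-α) • (((Ring.inverse S) u : 𝓗)) := rfl
      rw [hco, H.map_smul, inner_smul_right]
      congr 1
    rw [h2, h3, hinner0] at h1
    rw [← h1]
    ring
  exact ⟨left_ne_zero_of_mul_eq_one hmain, inv_eq_of_mul_eq_one_right hmain⟩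
end

section
/- For all real ε > 0, Γ > 0, λ and E_r, ∫_ℝ (2ε²/((μ − λ)² + ε²))·((1/π)·Γ/((μ − E_r)² + Γ²)) dμ = 2ε(ε + Γ)/((λ − E_r)² + (ε + Γ)²). -/
open MeasureTheory Filter Real Topology

section LorentzianAux

lemma denom_ne (c s : ℝ) (hs : 0 < s) (x : ℝ) : (x - c) ^ 2 + s ^ 2 ≠ 0 := by positivity

lemma hasDerivAt_atan (c s : ℝ) (hs : 0 < s) (x : ℝ) :
    HasDerivAt (fun x => Real.arctan ((x - c) / s)) (s / ((x - c) ^ 2 + s ^ 2)) x := by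
  have h1 : HasDerivAt (fun x : ℝ => (x - c) / s) (1 / s) x := by
    simpa using ((hasDerivAt_id x).sub_const c).div_const s
  have := (Real.hasDerivAt_arctan ((x - c) / s)).comp x h1
  refine this.congr_deriv ?_
  have hd := denom_ne c s hs x
  field_simp
  ring

lemma hasDerivAt_logq (c s : ℝ) (hs : 0 < s) (x : ℝ) :
    HasDerivAt (fun x => Real.log ((x - c) ^ 2 + s ^ 2))
      (2 * (x - c) / ((x - c) ^ 2 + s ^ 2)) x := by
  have h1 : HasDerivAt (fun x : ℝ => (x - c) ^ 2 + s ^ 2) (2 * (x - c)) x := by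
    simpa using (((hasDerivAt_id x).sub_const c).pow 2).add_const (s ^ 2)
  refine ((Real.hasDerivAt_log (denom_ne c s hs x)).comp x h1).congr_deriv ?_
  ring

lemma hasDerivAt_rat (c s : ℝ) (hs : 0 < s) (x : ℝ) :
    HasDerivAt (fun x => (x - c) / ((x - c) ^ 2 + s ^ 2))
      ((s ^ 2 - (x - c) ^ 2) / ((x - c) ^ 2 + s ^ 2) ^ 2) x := by
  have h1 : HasDerivAt (fun x : ℝ => x - c) 1 x := (hasDerivAt_id x).sub_const c
  have h2 : HasDerivAt (fun x : ℝ => (x - c) ^ 2 + s ^ 2) (2 * (x - c)) x := by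
    simpa using (h1.pow 2).add_const (s ^ 2)
  have := h1.div h2 (denom_ne c s hs x)
  refine this.congr_deriv ?_
  field_simp
  ring

lemma aux_one_sub (a : ℝ) (l : Filter ℝ) (h1 : Tendsto (fun x : ℝ => x⁻¹) l (𝓝 0)) :
    Tendsto (fun x : ℝ => 1 - a * x⁻¹) l (𝓝 1) := by
  have := (tendsto_const_nhds : Tendsto (fun _ : ℝ => (1:ℝ)) l (𝓝 1)).sub (h1.const_mul a)
  simpa using this

lemma aux_mul_inv (a : ℝ) (l : Filter ℝ) (h1 : Tendsto (fun x : ℝ => x⁻¹) l (𝓝 0)) :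
    Tendsto (fun x : ℝ => (a * x⁻¹) ^ 2) l (𝓝 0) := by
  have := (h1.const_mul a).pow 2
  simpa using this

lemma aux_quad (a c : ℝ) (l : Filter ℝ) (h1 : Tendsto (fun x : ℝ => x⁻¹) l (𝓝 0)) :
    Tendsto (fun x : ℝ => (1 - a * x⁻¹) ^ 2 + (c * x⁻¹) ^ 2) l (𝓝 1) := by
  have := ((aux_one_sub a l h1).pow 2).add (aux_mul_inv c l h1)
  simpa using this

lemma tendsto_ratio (a b c d : ℝ) (hd : 0 < d) (l : Filter ℝ)
    (h1 : Tendsto (fun x : ℝ => x⁻¹) l (𝓝 0)) (h2 : ∀ᶠ x in l, x ≠ 0) :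
    Tendsto (fun x => ((x - a) ^ 2 + c ^ 2) / ((x - b) ^ 2 + d ^ 2)) l (𝓝 1) := by
  have := (aux_quad a c l h1).div (aux_quad b d l h1) one_ne_zero
  rw [div_one] at this
  refine this.congr' ?_
  filter_upwards [h2] with x hx
  have h3 : (x - b) ^ 2 + d ^ 2 ≠ 0 := by positivity
  simp only [Pi.div_apply]
  field_simp

lemma tendsto_rat (c s : ℝ) (hs : 0 < s) (l : Filter ℝ)
    (h1 : Tendsto (fun x : ℝ => x⁻¹) l (𝓝 0)) (h2 : ∀ᶠ x in l, x ≠ 0) :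
    Tendsto (fun x => (x - c) / ((x - c) ^ 2 + s ^ 2)) l (𝓝 0) := by
  have hnum : Tendsto (fun x : ℝ => x⁻¹ * (1 - c * x⁻¹)) l (𝓝 0) := by
    have := h1.mul (aux_one_sub c l h1)
    simpa using this
  have := hnum.div (aux_quad c s l h1) one_ne_zero
  rw [zero_div] at this
  refine this.congr' ?_
  filter_upwards [h2] with x hx
  have h3 : (x - c) ^ 2 + s ^ 2 ≠ 0 := by positivity
  simp only [Pi.div_apply]
  field_simp

lemma tendsto_logratio (a b c d : ℝ) (hc : 0 < c) (hd : 0 < d) (l : Filter ℝ)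
    (h1 : Tendsto (fun x : ℝ => x⁻¹) l (𝓝 0)) (h2 : ∀ᶠ x in l, x ≠ 0) :
    Tendsto (fun x => Real.log ((x - a) ^ 2 + c ^ 2) - Real.log ((x - b) ^ 2 + d ^ 2))
      l (𝓝 0) := by
  have := (Real.continuousAt_log one_ne_zero).tendsto.comp (tendsto_ratio a b c d hd l h1 h2)
  rw [Real.log_one] at this
  refine this.congr fun x => ?_
  have hn : (0:ℝ) < (x - a) ^ 2 + c ^ 2 := by positivity
  have hm : (0:ℝ) < (x - b) ^ 2 + d ^ 2 := by positivity
  simp [Function.comp, Real.log_div hn.ne' hm.ne']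

lemma tendsto_atan_top (c s : ℝ) (hs : 0 < s) :
    Tendsto (fun x => Real.arctan ((x - c) / s)) atTop (𝓝 (π / 2)) := by
  have h0 : Tendsto (fun x : ℝ => (x - c) / s) atTop atTop := by
    apply Tendsto.atTop_div_const hs
    exact tendsto_atTop_add_const_right _ (-c) tendsto_id |>.congr fun x => by simp only [id_eq]; ring
  exact (tendsto_nhds_of_tendsto_nhdsWithin Real.tendsto_arctan_atTop).comp h0

lemma tendsto_atan_bot (c s : ℝ) (hs : 0 < s) :
    Tendsto (fun x => Real.arctan ((x - c) / s)) atBot (𝓝 (-(π / 2))) := by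
  have h0 : Tendsto (fun x : ℝ => (x - c) / s) atBot atBot := by
    apply Tendsto.atBot_div_const hs
    exact tendsto_atBot_add_const_right _ (-c) tendsto_id |>.congr fun x => by simp only [id_eq]; ring
  exact (tendsto_nhds_of_tendsto_nhdsWithin Real.tendsto_arctan_atBot).comp h0

lemma inv_bot : Tendsto (fun x : ℝ => x⁻¹) atBot (𝓝 0) := by
  have h := (tendsto_neg_atBot_atTop : Tendsto (fun x:ℝ => -x) atBot atTop).inv_tendsto_atTop.neg
  rw [neg_zero] at h
  refine h.congr fun x => ?_
  show -(-x)⁻¹ = x⁻¹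
  rw [inv_neg, neg_neg]

lemma integrable_lorentz (b d : ℝ) (hd : 0 < d) :
    Integrable (fun x : ℝ => ((x - b) ^ 2 + d ^ 2)⁻¹) := by
  have h2 := integrable_inv_one_add_sq.comp_div (R := d) hd.ne'
  have h3 := h2.comp_sub_right b
  have h4 := h3.const_mul ((d : ℝ) ^ 2)⁻¹
  refine h4.congr (Filter.Eventually.of_forall fun x => ?_)
  have h5 : (x - b) ^ 2 + d ^ 2 ≠ 0 := by positivity
  field_simp
  ring

lemma integrable_integrand (ε Γ lam Er : ℝ) (hε : 0 < ε) (hΓ : 0 < Γ) :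
    Integrable (fun x : ℝ => (2 * ε ^ 2 / ((x - lam) ^ 2 + ε ^ 2)) *
        ((1 / Real.pi) * Γ / ((x - Er) ^ 2 + Γ ^ 2))) := by
  have hc : Continuous (fun x : ℝ => (2 * ε ^ 2 / ((x - lam) ^ 2 + ε ^ 2)) *
      ((1 / Real.pi) * Γ / ((x - Er) ^ 2 + Γ ^ 2))) := by
    apply Continuous.mul
    · exact continuous_const.div (by continuity) (fun x => by positivity)
    · exact continuous_const.div (by continuity) (fun x => by positivity)
  refine ((integrable_lorentz Er Γ hΓ).const_mul (2 * (1 / Real.pi) * Γ)).mono'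
    hc.aestronglyMeasurable (Filter.Eventually.of_forall fun x => ?_)
  have hpi := Real.pi_pos
  have h1 : (0:ℝ) < (x - lam) ^ 2 + ε ^ 2 := by positivity
  have h2 : (0:ℝ) < (x - Er) ^ 2 + Γ ^ 2 := by positivity
  rw [Real.norm_eq_abs, abs_of_nonneg (by positivity)]
  have key : 2 * ε ^ 2 / ((x - lam) ^ 2 + ε ^ 2) ≤ 2 := by
    rw [div_le_iff₀ h1]; nlinarith [sq_nonneg (x - lam)]
  calc 2 * ε ^ 2 / ((x - lam) ^ 2 + ε ^ 2) * (1 / π * Γ / ((x - Er) ^ 2 + Γ ^ 2))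
      ≤ 2 * (1 / π * Γ / ((x - Er) ^ 2 + Γ ^ 2)) :=
        mul_le_mul_of_nonneg_right key (by positivity)
    _ = 2 * (1 / Real.pi) * Γ * (((x - Er) ^ 2 + Γ ^ 2)⁻¹) := by
        rw [div_eq_mul_inv]; ring

lemma combine (P1 P2 a b d u v ε Γ : ℝ) (h1 : P1 ≠ 0) (h2 : P2 ≠ 0)
    (hε : ε ≠ 0) (hΓ : Γ ≠ 0) (_hπ : Real.pi ≠ 0)
    (hQ : (a * u + b) * P2 + (-(a * v) + d) * P1 ≠ 0) :
    2 * ε ^ 2 / P1 * (1 / π * Γ / P2)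
      = 2 * ε ^ 2 * Γ / π *
        ((a / ((a * u + b) * P2 + (-(a * v) + d) * P1) / 2 * (2 * u / P1 - 2 * v / P2) +
          b / ((a * u + b) * P2 + (-(a * v) + d) * P1) / ε * (ε / P1)) +
         d / ((a * u + b) * P2 + (-(a * v) + d) * P1) / Γ * (Γ / P2)) := by
  field_simp
  have hQ' : a * P2 * u - a * P1 * v + P2 * b + P1 * d ≠ 0 := by
    intro h; apply hQ; linear_combination h
  linear_combination -(mul_inv_cancel₀ hQ')

lemma final_val (t ε Γ A : ℝ) (hε : ε ≠ 0) (hΓ : Γ ≠ 0) (_hπ : Real.pi ≠ 0)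
    (h1 : t + (ε + Γ) ^ 2 ≠ 0) (h2 : t + (ε - Γ) ^ 2 ≠ 0) :
    2 * ε ^ 2 * Γ / π *
        ((A / 2 * 0 + (t + Γ ^ 2 - ε ^ 2) / ((t + (ε + Γ) ^ 2) * (t + (ε - Γ) ^ 2)) / ε * (π / 2)) +
          (t + ε ^ 2 - Γ ^ 2) / ((t + (ε + Γ) ^ 2) * (t + (ε - Γ) ^ 2)) / Γ * (π / 2)) -
      2 * ε ^ 2 * Γ / π *
        ((A / 2 * 0 + (t + Γ ^ 2 - ε ^ 2) / ((t + (ε + Γ) ^ 2) * (t + (ε - Γ) ^ 2)) / ε * (-(π / 2))) +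
          (t + ε ^ 2 - Γ ^ 2) / ((t + (ε + Γ) ^ 2) * (t + (ε - Γ) ^ 2)) / Γ * (-(π / 2)))
      = 2 * ε * (ε + Γ) / (t + (ε + Γ) ^ 2) := by
  field_simp
  ring
lemma deg_case (ε lam : ℝ) (hε : 0 < ε) :
    ∫ x : ℝ, (2 * ε ^ 2 / ((x - lam) ^ 2 + ε ^ 2)) *
        ((1 / Real.pi) * ε / ((x - lam) ^ 2 + ε ^ 2))
      = 2 * ε * (ε + ε) / ((lam - lam) ^ 2 + (ε + ε) ^ 2) := by
  have hπ := Real.pi_pos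
  have hderiv : ∀ x : ℝ, HasDerivAt
      (fun x => 1 / π * Real.arctan ((x - lam) / ε) +
        ε / π * ((x - lam) / ((x - lam) ^ 2 + ε ^ 2)))
      ((2 * ε ^ 2 / ((x - lam) ^ 2 + ε ^ 2)) *
        ((1 / Real.pi) * ε / ((x - lam) ^ 2 + ε ^ 2))) x := by
    intro x
    have h := ((hasDerivAt_atan lam ε hε x).const_mul (1 / π)).add
      ((hasDerivAt_rat lam ε hε x).const_mul (ε / π))
    refine h.congr_deriv ?_
    have hd := denom_ne lam ε hε x
    field_simp
    ring
  have htop : Tendsto (fun x => 1 / π * Real.arctan ((x - lam) / ε) +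
      ε / π * ((x - lam) / ((x - lam) ^ 2 + ε ^ 2))) atTop
      (𝓝 (1 / π * (π / 2) + ε / π * 0)) :=
    ((tendsto_atan_top lam ε hε).const_mul (1 / π)).add
      ((tendsto_rat lam ε hε atTop tendsto_inv_atTop_zero (eventually_ne_atTop 0)).const_mul (ε / π))
  have hbot : Tendsto (fun x => 1 / π * Real.arctan ((x - lam) / ε) +
      ε / π * ((x - lam) / ((x - lam) ^ 2 + ε ^ 2))) atBot
      (𝓝 (1 / π * (-(π / 2)) + ε / π * 0)) :=
    ((tendsto_atan_bot lam ε hε).const_mul (1 / π)).add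
      ((tendsto_rat lam ε hε atBot inv_bot (eventually_ne_atBot 0)).const_mul (ε / π))
  rw [integral_of_hasDerivAt_of_tendsto hderiv
    (integrable_integrand ε ε lam lam hε hε) hbot htop]
  have hεne := hε.ne'
  field_simp
  ring
lemma gen_case (ε Γ lam Er : ℝ) (hε : 0 < ε) (hΓ : 0 < Γ)
    (hQ2 : (lam - Er) ^ 2 + (ε - Γ) ^ 2 ≠ 0) :
    ∫ x : ℝ, (2 * ε ^ 2 / ((x - lam) ^ 2 + ε ^ 2)) *
        ((1 / Real.pi) * Γ / ((x - Er) ^ 2 + Γ ^ 2))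
      = 2 * ε * (ε + Γ) / ((lam - Er) ^ 2 + (ε + Γ) ^ 2) := by
  have hπ := Real.pi_ne_zero
  have hQ1 : (lam - Er) ^ 2 + (ε + Γ) ^ 2 ≠ 0 := by positivity
  have hderiv : ∀ x : ℝ, HasDerivAt
      (fun x => 2 * ε ^ 2 * Γ / π *
        ((-2 * (lam - Er) / (((lam - Er) ^ 2 + (ε + Γ) ^ 2) * ((lam - Er) ^ 2 + (ε - Γ) ^ 2)) / 2 *
            (Real.log ((x - lam) ^ 2 + ε ^ 2) - Real.log ((x - Er) ^ 2 + Γ ^ 2)) +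
          ((lam - Er) ^ 2 + Γ ^ 2 - ε ^ 2) /
            (((lam - Er) ^ 2 + (ε + Γ) ^ 2) * ((lam - Er) ^ 2 + (ε - Γ) ^ 2)) / ε *
            Real.arctan ((x - lam) / ε)) +
         ((lam - Er) ^ 2 + ε ^ 2 - Γ ^ 2) /
            (((lam - Er) ^ 2 + (ε + Γ) ^ 2) * ((lam - Er) ^ 2 + (ε - Γ) ^ 2)) / Γ *
            Real.arctan ((x - Er) / Γ)))
      ((2 * ε ^ 2 / ((x - lam) ^ 2 + ε ^ 2)) *
        ((1 / Real.pi) * Γ / ((x - Er) ^ 2 + Γ ^ 2))) x := by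
    intro x
    have h := (((((hasDerivAt_logq lam ε hε x).sub (hasDerivAt_logq Er Γ hΓ x)).const_mul
      (-2 * (lam - Er) / (((lam - Er) ^ 2 + (ε + Γ) ^ 2) * ((lam - Er) ^ 2 + (ε - Γ) ^ 2)) / 2)).add
      ((hasDerivAt_atan lam ε hε x).const_mul
      (((lam - Er) ^ 2 + Γ ^ 2 - ε ^ 2) /
        (((lam - Er) ^ 2 + (ε + Γ) ^ 2) * ((lam - Er) ^ 2 + (ε - Γ) ^ 2)) / ε))).add
      ((hasDerivAt_atan Er Γ hΓ x).const_mul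
      (((lam - Er) ^ 2 + ε ^ 2 - Γ ^ 2) /
        (((lam - Er) ^ 2 + (ε + Γ) ^ 2) * ((lam - Er) ^ 2 + (ε - Γ) ^ 2)) / Γ))).const_mul
      (2 * ε ^ 2 * Γ / π)
    refine h.congr_deriv ?_
    have key : ((lam - Er) ^ 2 + (ε + Γ) ^ 2) * ((lam - Er) ^ 2 + (ε - Γ) ^ 2)
        = (-2 * (lam - Er) * (x - lam) + ((lam - Er) ^ 2 + Γ ^ 2 - ε ^ 2)) *
            ((x - Er) ^ 2 + Γ ^ 2) +
          (-(-2 * (lam - Er) * (x - Er)) + ((lam - Er) ^ 2 + ε ^ 2 - Γ ^ 2)) *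
            ((x - lam) ^ 2 + ε ^ 2) := by ring
    rw [key]
    exact (combine ((x - lam) ^ 2 + ε ^ 2) ((x - Er) ^ 2 + Γ ^ 2) (-2 * (lam - Er))
      ((lam - Er) ^ 2 + Γ ^ 2 - ε ^ 2) ((lam - Er) ^ 2 + ε ^ 2 - Γ ^ 2) (x - lam) (x - Er) ε Γ
      (denom_ne lam ε hε x) (denom_ne Er Γ hΓ x) hε.ne' hΓ.ne' Real.pi_ne_zero (key ▸ mul_ne_zero hQ1 hQ2)).symm
  have htop : Tendsto
      (fun x => 2 * ε ^ 2 * Γ / π *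
        ((-2 * (lam - Er) / (((lam - Er) ^ 2 + (ε + Γ) ^ 2) * ((lam - Er) ^ 2 + (ε - Γ) ^ 2)) / 2 *
            (Real.log ((x - lam) ^ 2 + ε ^ 2) - Real.log ((x - Er) ^ 2 + Γ ^ 2)) +
          ((lam - Er) ^ 2 + Γ ^ 2 - ε ^ 2) /
            (((lam - Er) ^ 2 + (ε + Γ) ^ 2) * ((lam - Er) ^ 2 + (ε - Γ) ^ 2)) / ε *
            Real.arctan ((x - lam) / ε)) +
         ((lam - Er) ^ 2 + ε ^ 2 - Γ ^ 2) /
            (((lam - Er) ^ 2 + (ε + Γ) ^ 2) * ((lam - Er) ^ 2 + (ε - Γ) ^ 2)) / Γ *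
            Real.arctan ((x - Er) / Γ)))
      atTop (𝓝 (2 * ε ^ 2 * Γ / π *
        ((-2 * (lam - Er) / (((lam - Er) ^ 2 + (ε + Γ) ^ 2) * ((lam - Er) ^ 2 + (ε - Γ) ^ 2)) / 2 * 0 +
          ((lam - Er) ^ 2 + Γ ^ 2 - ε ^ 2) /
            (((lam - Er) ^ 2 + (ε + Γ) ^ 2) * ((lam - Er) ^ 2 + (ε - Γ) ^ 2)) / ε * (π / 2)) +
         ((lam - Er) ^ 2 + ε ^ 2 - Γ ^ 2) /
            (((lam - Er) ^ 2 + (ε + Γ) ^ 2) * ((lam - Er) ^ 2 + (ε - Γ) ^ 2)) / Γ * (π / 2)))) :=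
    ((((tendsto_logratio lam Er ε Γ hε hΓ atTop tendsto_inv_atTop_zero
        (eventually_ne_atTop 0)).const_mul _).add
      ((tendsto_atan_top lam ε hε).const_mul _)).add
      ((tendsto_atan_top Er Γ hΓ).const_mul _)).const_mul _
  have hbot : Tendsto
      (fun x => 2 * ε ^ 2 * Γ / π *
        ((-2 * (lam - Er) / (((lam - Er) ^ 2 + (ε + Γ) ^ 2) * ((lam - Er) ^ 2 + (ε - Γ) ^ 2)) / 2 *
            (Real.log ((x - lam) ^ 2 + ε ^ 2) - Real.log ((x - Er) ^ 2 + Γ ^ 2)) +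
          ((lam - Er) ^ 2 + Γ ^ 2 - ε ^ 2) /
            (((lam - Er) ^ 2 + (ε + Γ) ^ 2) * ((lam - Er) ^ 2 + (ε - Γ) ^ 2)) / ε *
            Real.arctan ((x - lam) / ε)) +
         ((lam - Er) ^ 2 + ε ^ 2 - Γ ^ 2) /
            (((lam - Er) ^ 2 + (ε + Γ) ^ 2) * ((lam - Er) ^ 2 + (ε - Γ) ^ 2)) / Γ *
            Real.arctan ((x - Er) / Γ)))
      atBot (𝓝 (2 * ε ^ 2 * Γ / π *
        ((-2 * (lam - Er) / (((lam - Er) ^ 2 + (ε + Γ) ^ 2) * ((lam - Er) ^ 2 + (ε - Γ) ^ 2)) / 2 * 0 +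
          ((lam - Er) ^ 2 + Γ ^ 2 - ε ^ 2) /
            (((lam - Er) ^ 2 + (ε + Γ) ^ 2) * ((lam - Er) ^ 2 + (ε - Γ) ^ 2)) / ε * (-(π / 2))) +
         ((lam - Er) ^ 2 + ε ^ 2 - Γ ^ 2) /
            (((lam - Er) ^ 2 + (ε + Γ) ^ 2) * ((lam - Er) ^ 2 + (ε - Γ) ^ 2)) / Γ * (-(π / 2))))) :=
    ((((tendsto_logratio lam Er ε Γ hε hΓ atBot inv_bot
        (eventually_ne_atBot 0)).const_mul _).add
      ((tendsto_atan_bot lam ε hε).const_mul _)).add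
      ((tendsto_atan_bot Er Γ hΓ).const_mul _)).const_mul _
  rw [integral_of_hasDerivAt_of_tendsto hderiv
    (integrable_integrand ε Γ lam Er hε hΓ) hbot htop]
  exact final_val ((lam - Er) ^ 2) ε Γ
    (-2 * (lam - Er) / (((lam - Er) ^ 2 + (ε + Γ) ^ 2) * ((lam - Er) ^ 2 + (ε - Γ) ^ 2)))
    hε.ne' hΓ.ne' Real.pi_ne_zero hQ1 hQ2

end LorentzianAux

/-- For all real `ε > 0`, `Γ > 0`, `λ` and `E_r`,
`∫_ℝ (2ε²/((μ−λ)² + ε²))·((1/π)·Γ/((μ−E_r)² + Γ²)) dμ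
  = 2ε(ε+Γ)/((λ−E_r)² + (ε+Γ)²)`. -/
theorem integral_lorentzian_poisson (ε Γ lam Er : ℝ) (hε : 0 < ε) (hΓ : 0 < Γ) :
    ∫ x : ℝ, (2 * ε ^ 2 / ((x - lam) ^ 2 + ε ^ 2)) *
        ((1 / Real.pi) * Γ / ((x - Er) ^ 2 + Γ ^ 2))
      = 2 * ε * (ε + Γ) / ((lam - Er) ^ 2 + (ε + Γ) ^ 2) := by
  by_cases hdeg : lam = Er ∧ ε = Γ
  · obtain ⟨h1, h2⟩ := hdeg
    subst h1; subst h2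
    exact deg_case ε lam hε
  · rw [not_and_or] at hdeg
    have hQ2 : (lam - Er) ^ 2 + (ε - Γ) ^ 2 ≠ 0 := by
      rcases hdeg with h | h
      · have hne : lam - Er ≠ 0 := sub_ne_zero.mpr h
        have hp : 0 < (lam - Er) ^ 2 :=
          lt_of_le_of_ne (sq_nonneg _) (Ne.symm (pow_ne_zero 2 hne))
        exact ne_of_gt (add_pos_of_pos_of_nonneg hp (sq_nonneg _))
      · have hne : ε - Γ ≠ 0 := sub_ne_zero.mpr h
        have hp : 0 < (ε - Γ) ^ 2 :=
          lt_of_le_of_ne (sq_nonneg _) (Ne.symm (pow_ne_zero 2 hne))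
        exact ne_of_gt (add_pos_of_nonneg_of_pos (sq_nonneg _) hp)
    exact gen_case ε Γ lam Er hε hΓ hQ2
end
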